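/- arXiv:2509.19829 — 7 statements merged into one kernel-verified Lean document; each statement's English description precedes it below -/
import Mathlib

section
/- Let B be a Blaschke product with Property 𝔅 and let δ ∈ (0,1). Let Ω₀ be a connected component of the level set Ω_{B,δ} = {z ∈ 𝔻 : |B(z)| < δ}. Then B maps the closure of Ω₀ onto the closed disk {w ∈ ℂ : |w| ≤ δ}, and B maps the boundary ∂Ω₀ onto the circle {w ∈ ℂ : |w| = δ}. -/
noncomputable section

/-- The level set Ω_{f,θ} = {z ∈ 𝔻 : |f(z)| < θ}. -/
def levelSet (f : ℂ → ℂ) (θ : ℝ) : Set ℂ :=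
  {z : ℂ | ‖z‖ < 1 ∧ ‖f z‖ < θ}

/-- An inner function: holomorphic and bounded by 1 on 𝔻, with radial limits of modulus 1 a.e. -/
def IsInner (u : ℂ → ℂ) : Prop :=
  DifferentiableOn ℂ u (Metric.ball (0:ℂ) 1) ∧
  (∀ z ∈ Metric.ball (0:ℂ) 1, ‖u z‖ ≤ 1) ∧
  (∀ᵐ θ : ℝ ∂MeasureTheory.volume,
    Filter.Tendsto
      (fun r : ℝ => ‖u ((r : ℂ) * Complex.exp ((θ : ℂ) * Complex.I))‖)
      (nhdsWithin 1 (Set.Iio 1)) (nhds 1))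

/-- The pseudo-hyperbolic distance on 𝔻. -/
def pseudoDist (z w : ℂ) : ℝ :=
  ‖z - w‖ / ‖1 - (starRingEnd ℂ) z * w‖

/-- δ_{u,η} : sup of pseudo-hyperbolic distances of pairs lying in a common component of Ω_{u,η}. -/
def deltaLevel (u : ℂ → ℂ) (η : ℝ) : ℝ :=
  sSup {d : ℝ | ∃ z₁ z₂ : ℂ, z₁ ∈ levelSet u η ∧
    z₂ ∈ connectedComponentIn (levelSet u η) z₁ ∧ d = pseudoDist z₁ z₂}

/-- Property 𝔅. -/
def PropertyB (u : ℂ → ℂ) : Prop :=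
  ∀ θ ∈ Set.Ioo (0:ℝ) 1, ∀ z ∈ levelSet u θ,
    closure (connectedComponentIn (levelSet u θ) z) ⊆ Metric.ball (0:ℂ) 1

/-- θ-weak Property 𝔅. -/
def WeakPropertyBAt (u : ℂ → ℂ) (θ : ℝ) : Prop :=
  θ ∈ Set.Ioo (0:ℝ) 1 ∧ ∀ z ∈ levelSet u θ,
    closure (connectedComponentIn (levelSet u θ) z) ⊆ Metric.ball (0:ℂ) 1

/-- η-weak Property 𝔥. -/
def WeakPropertyHAt (u : ℂ → ℂ) (η : ℝ) : Prop :=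
  WeakPropertyBAt u η ∧ deltaLevel u η < 1

/-- Supremum norm over the unit disk. -/
def supNormD (f : ℂ → ℂ) : ℝ :=
  ⨆ z : (Metric.ball (0:ℂ) 1), ‖f (z : ℂ)‖

/-- A Blaschke product. -/
def IsBlaschkeProduct (B : ℂ → ℂ) : Prop :=
  ∃ (ι : Type) (_ : Countable ι) (m : ℕ) (lam : ℂ) (α : ι → ℂ),
    ‖lam‖ = 1 ∧
    (∀ n, ‖α n‖ < 1 ∧ α n ≠ 0) ∧
    (Summable fun n => 1 - ‖α n‖) ∧
    ∀ z ∈ Metric.ball (0:ℂ) 1,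
      B z = lam * z ^ m *
        ∏' n, ((‖α n‖ : ℂ) / α n) * ((α n - z) / (1 - (starRingEnd ℂ) (α n) * z))

/-- Order of vanishing (multiplicity of zero) via iterated derivatives. -/
def zeroOrder (f : ℂ → ℂ) (z : ℂ) : ℕ :=
  sInf {n : ℕ | iteratedDeriv n f z ≠ 0}


open Filter Finset

variable {ι : Type*}

lemma norm_prod_sub_one_le (f : ι → ℂ) (s : Finset ι) :
    ‖∏ i ∈ s, f i - 1‖ ≤ Real.exp (∑ i ∈ s, ‖f i - 1‖) - 1 := by
  classical
  induction s using Finset.cons_induction with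
  | empty => simp
  | cons a s ha ih =>
    rw [Finset.prod_cons, Finset.sum_cons]
    have hP : ‖∏ i ∈ s, f i‖ ≤ Real.exp (∑ i ∈ s, ‖f i - 1‖) := by
      calc ‖∏ i ∈ s, f i‖ ≤ ‖∏ i ∈ s, f i - 1‖ + 1 := by
            simpa using norm_add_le (∏ i ∈ s, f i - 1) 1
        _ ≤ Real.exp (∑ i ∈ s, ‖f i - 1‖) := by linarith
    calc ‖f a * ∏ i ∈ s, f i - 1‖
        = ‖(f a - 1) * ∏ i ∈ s, f i + (∏ i ∈ s, f i - 1)‖ := by ring_nf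
      _ ≤ ‖(f a - 1) * ∏ i ∈ s, f i‖ + ‖∏ i ∈ s, f i - 1‖ := norm_add_le _ _
      _ ≤ ‖f a - 1‖ * Real.exp (∑ i ∈ s, ‖f i - 1‖) + (Real.exp (∑ i ∈ s, ‖f i - 1‖) - 1) := by
          rw [norm_mul]
          gcongr
      _ = (1 + ‖f a - 1‖) * Real.exp (∑ i ∈ s, ‖f i - 1‖) - 1 := by ring
      _ ≤ Real.exp (‖f a - 1‖) * Real.exp (∑ i ∈ s, ‖f i - 1‖) - 1 := by
          have h1 : 1 + ‖f a - 1‖ ≤ Real.exp (‖f a - 1‖) := by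
            rw [add_comm]; exact Real.add_one_le_exp _
          have h2 : (0:ℝ) ≤ Real.exp (∑ i ∈ s, ‖f i - 1‖) := (Real.exp_pos _).le
          nlinarith
      _ = Real.exp (‖f a - 1‖ + ∑ i ∈ s, ‖f i - 1‖) - 1 := by rw [Real.exp_add]

lemma norm_prod_le_exp {f : ι → ℂ} {d : ι → ℝ} (h : ∀ i, ‖f i - 1‖ ≤ d i)
    (hd : Summable d) (s : Finset ι) : ‖∏ i ∈ s, f i‖ ≤ Real.exp (∑' i, d i) := by
  have h0 : ∀ i, (0:ℝ) ≤ d i := fun i => le_trans (norm_nonneg _) (h i)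
  have h1 : ∑ i ∈ s, ‖f i - 1‖ ≤ ∑' i, d i :=
    le_trans (Finset.sum_le_sum fun i _ => h i) (Summable.sum_le_tsum s (fun i _ => h0 i) hd)
  calc ‖∏ i ∈ s, f i‖ ≤ ‖∏ i ∈ s, f i - 1‖ + 1 := by
        simpa using norm_add_le (∏ i ∈ s, f i - 1) 1
    _ ≤ Real.exp (∑ i ∈ s, ‖f i - 1‖) - 1 + 1 := by linarith [norm_prod_sub_one_le f s]
    _ ≤ Real.exp (∑' i, d i) := by
        rw [sub_add_cancel]; exact Real.exp_le_exp.2 h1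

lemma multipliable_of_bound {f : ι → ℂ} {d : ι → ℝ} (h : ∀ i, ‖f i - 1‖ ≤ d i)
    (hd : Summable d) : Multipliable f := by
  classical
  have h0 : ∀ i, (0:ℝ) ≤ d i := fun i => le_trans (norm_nonneg _) (h i)
  set E := Real.exp (∑' i, d i) with hE
  have hEpos : 0 < E := Real.exp_pos _
  have hcauchy : CauchySeq (fun s : Finset ι => ∏ i ∈ s, f i) := by
    rw [Metric.cauchySeq_iff]
    intro ε hε
    set ε' := Real.log (1 + ε / (3 * E)) with hε'
    have hε'pos : 0 < ε' := Real.log_pos (by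
      have h3 : 0 < ε / (3 * E) := by positivity
      linarith)
    obtain ⟨s₀, hs₀⟩ := summable_iff_vanishing.1 hd (Metric.ball 0 ε') (Metric.ball_mem_nhds 0 hε'pos)
    refine ⟨s₀, fun u hu v hv => ?_⟩
    have key : ∀ w : Finset ι, s₀ ⊆ w → dist (∏ i ∈ w, f i) (∏ i ∈ s₀, f i) ≤ ε / 3 := by
      intro w hw
      have hsplit : ∏ i ∈ w, f i = (∏ i ∈ s₀, f i) * ∏ i ∈ w \ s₀, f i := by
        rw [← Finset.prod_union (Finset.disjoint_sdiff)]
        rw [Finset.union_sdiff_of_subset hw]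
      have hdisj : Disjoint (w \ s₀) s₀ := Finset.sdiff_disjoint
      have htail : ∑ i ∈ w \ s₀, d i < ε' := by
        have := hs₀ _ hdisj
        rw [Metric.mem_ball, Real.dist_eq, sub_zero] at this
        exact lt_of_abs_lt this
      have htail' : ∑ i ∈ w \ s₀, ‖f i - 1‖ < ε' :=
        lt_of_le_of_lt (Finset.sum_le_sum fun i _ => h i) htail
      calc dist (∏ i ∈ w, f i) (∏ i ∈ s₀, f i)
          = ‖∏ i ∈ s₀, f i‖ * ‖∏ i ∈ w \ s₀, f i - 1‖ := by
            rw [dist_eq_norm, hsplit, ← norm_mul]; ring_nf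
        _ ≤ E * (Real.exp ε' - 1) := by
            apply mul_le_mul (norm_prod_le_exp h hd s₀)
            · exact le_trans (norm_prod_sub_one_le f _)
                (by have := Real.exp_le_exp.2 htail'.le; linarith)
            · exact norm_nonneg _
            · exact hEpos.le
        _ = ε / 3 := by
            rw [hε', Real.exp_log (by positivity)]
            field_simp
            ring
    calc dist (∏ i ∈ u, f i) (∏ i ∈ v, f i)
        ≤ dist (∏ i ∈ u, f i) (∏ i ∈ s₀, f i) + dist (∏ i ∈ s₀, f i) (∏ i ∈ v, f i) :=
          dist_triangle _ _ _
      _ ≤ ε / 3 + ε / 3 := by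
          have h1 := key u hu
          have h2 := key v hv
          rw [dist_comm (∏ i ∈ s₀, f i)]
          linarith
      _ < ε := by linarith
  obtain ⟨a, ha⟩ := cauchySeq_tendsto_of_complete hcauchy
  exact ⟨a, ha⟩

lemma norm_tprod_sub_one_le {f : ι → ℂ} {d : ι → ℝ} (h : ∀ i, ‖f i - 1‖ ≤ d i)
    (hd : Summable d) : ‖∏' i, f i - 1‖ ≤ Real.exp (∑' i, d i) - 1 := by
  have h0 : ∀ i, (0:ℝ) ≤ d i := fun i => le_trans (norm_nonneg _) (h i)
  have hm : Multipliable f := multipliable_of_bound h hd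
  have ht : Tendsto (fun s : Finset ι => ‖∏ i ∈ s, f i - 1‖) atTop (nhds ‖∏' i, f i - 1‖) :=
    ((hm.hasProd.sub tendsto_const_nhds).norm)
  refine le_of_tendsto ht (Filter.Eventually.of_forall fun s => ?_)
  refine le_trans (norm_prod_sub_one_le f s) ?_
  have h1 : ∑ i ∈ s, ‖f i - 1‖ ≤ ∑' i, d i :=
    le_trans (Finset.sum_le_sum fun i _ => h i) (Summable.sum_le_tsum s (fun i _ => h0 i) hd)
  have := Real.exp_le_exp.2 h1
  linarith


section Blaschke

open Filter Finset Metric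

set_option maxHeartbeats 2000000 in
lemma blaschke_differentiableOn (B : ℂ → ℂ) (hB : IsBlaschkeProduct B) :
    DifferentiableOn ℂ B (Metric.ball (0:ℂ) 1) := by
  classical
  obtain ⟨ι, _hcount, m, lam, α, _hlam, hα, hsum, hBeq⟩ := hB
  set f : ι → ℂ → ℂ := fun n z =>
    ((‖α n‖ : ℂ) / α n) * ((α n - z) / (1 - (starRingEnd ℂ) (α n) * z)) with hf
  have habs : ∀ n, ‖α n‖ < 1 := fun n => by
    exact (hα n).1
  have hden : ∀ (n : ι) (z : ℂ), ‖z‖ < 1 → 1 - ‖z‖ ≤ ‖1 - (starRingEnd ℂ) (α n) * z‖ := by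
    intro n z hz
    have h1 : ‖(starRingEnd ℂ) (α n) * z‖ ≤ ‖z‖ := by
      rw [norm_mul, RCLike.norm_conj]
      nlinarith [habs n, norm_nonneg z]
    have h2 := norm_sub_norm_le (1 : ℂ) ((starRingEnd ℂ) (α n) * z)
    rw [norm_one] at h2
    linarith
  have hden0 : ∀ (n : ι) (z : ℂ), ‖z‖ < 1 → 1 - (starRingEnd ℂ) (α n) * z ≠ 0 := by
    intro n z hz
    have := hden n z hz
    intro h0
    rw [h0, norm_zero] at this
    linarith
  have hest : ∀ r : ℝ, r < 1 → ∀ (n : ι) (z : ℂ), ‖z‖ ≤ r →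
      ‖f n z - 1‖ ≤ (1 - ‖α n‖) * ((1 + r) / (1 - r)) := by
    intro r hr1 n z hz
    have hr0 : 0 ≤ r := le_trans (norm_nonneg z) hz
    set a := α n with ha
    have ha0 : a ≠ 0 := (hα n).2
    have ha1 : ‖a‖ < 1 := (hα n).1
    have habs0 : 0 < ‖a‖ := norm_pos_iff.2 ha0
    have hzlt : ‖z‖ < 1 := lt_of_le_of_lt hz hr1
    have hd0 : 1 - (starRingEnd ℂ) a * z ≠ 0 := hden0 n z hzlt
    have hconj : a * (starRingEnd ℂ) a = ((‖a‖ : ℂ)) ^ 2 := by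
      rw [Complex.mul_conj, Complex.normSq_eq_norm_sq]
      push_cast
      ring
    have key : f n z - 1 =
        (((‖a‖ : ℂ) - 1) * (a + (‖a‖ : ℂ) * z)) /
          (a * (1 - (starRingEnd ℂ) a * z)) := by
      rw [hf]
      simp only [← ha]
      have hd0' : 1 - z * (starRingEnd ℂ) a ≠ 0 := by rwa [mul_comm]
      field_simp
      linear_combination z * hconj
    rw [key, norm_div, norm_mul, norm_mul]
    have e1 : ‖(‖a‖ : ℂ) - 1‖ = 1 - ‖a‖ := by
      have : ((‖a‖ : ℂ) - 1) = ((‖a‖ - 1 : ℝ) : ℂ) := by push_cast; ring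
      rw [this, Complex.norm_real, Real.norm_eq_abs, abs_of_nonpos (by linarith)]
      ring
    have e2 : ‖a + (‖a‖ : ℂ) * z‖ ≤ ‖a‖ * (1 + r) := by
      calc ‖a + (‖a‖ : ℂ) * z‖ ≤ ‖a‖ + ‖(‖a‖ : ℂ) * z‖ := norm_add_le _ _
        _ = ‖a‖ + ‖a‖ * ‖z‖ := by
            rw [norm_mul, Complex.norm_real, Real.norm_eq_abs, abs_of_nonneg habs0.le]
        _ ≤ ‖a‖ * (1 + r) := by nlinarith
    have e3 : ‖a‖ * (1 - r) ≤ ‖a‖ * ‖1 - (starRingEnd ℂ) a * z‖ := by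
      have h4 : 1 - r ≤ ‖1 - (starRingEnd ℂ) a * z‖ := by
        have := hden n z hzlt
        linarith
      nlinarith
    rw [e1]
    have hineq : (1 - ‖a‖) * ‖a + (‖a‖ : ℂ) * z‖ /
          (‖a‖ * ‖1 - (starRingEnd ℂ) a * z‖)
        ≤ ((1 - ‖a‖) * (‖a‖ * (1 + r))) / (‖a‖ * (1 - r)) := by
      apply div_le_div₀ ?_ (mul_le_mul_of_nonneg_left e2 (by linarith)) (by nlinarith) e3
      nlinarith [mul_nonneg (mul_nonneg (sub_nonneg.2 ha1.le) habs0.le)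
        (by linarith : (0:ℝ) ≤ 1 + r)]
    calc (1 - ‖a‖) * ‖a + (‖a‖ : ℂ) * z‖ /
          (‖a‖ * ‖1 - (starRingEnd ℂ) a * z‖)
        ≤ ((1 - ‖a‖) * (‖a‖ * (1 + r))) / (‖a‖ * (1 - r)) := hineq
      _ = (1 - ‖a‖) * ((1 + r) / (1 - r)) := by
          rw [show (1 - ‖a‖) * (‖a‖ * (1 + r)) =
            ‖a‖ * ((1 - ‖a‖) * (1 + r)) by ring,
            mul_div_mul_left _ _ (ne_of_gt habs0), mul_div_assoc]
  -- summability of the bounds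
  have hc0 : ∀ (r : ℝ), 0 ≤ r → r < 1 → ∀ n : ι,
      (0:ℝ) ≤ (1 - ‖α n‖) * ((1 + r) / (1 - r)) := by
    intro r hr0 hr1 n
    have := (hα n).1
    have h1 : (0:ℝ) ≤ 1 - ‖α n‖ := by linarith
    have h2 : (0:ℝ) ≤ (1 + r) / (1 - r) := by
      have h3 : (0:ℝ) < 1 - r := by linarith
      positivity
    exact mul_nonneg h1 h2
  have hmult : ∀ z : ℂ, ‖z‖ < 1 → Multipliable (fun n => f n z) := by
    intro z hz
    exact multipliable_of_bound (fun n => hest ‖z‖ hz n z le_rfl) (hsum.mul_right _)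
  -- each partial product is differentiable
  have hfac : ∀ n : ι, DifferentiableOn ℂ (f n) (Metric.ball (0:ℂ) 1) := by
    intro n
    apply (differentiableOn_const _).mul
    apply DifferentiableOn.div ((differentiableOn_const _).sub differentiableOn_id)
      ((differentiableOn_const _).sub ((differentiableOn_const _).mul differentiableOn_id))
    intro z hz
    exact hden0 n z (by simpa [Complex.dist_eq] using mem_ball_zero_iff.1 hz)
  have hdiffF : ∀ s : Finset ι, DifferentiableOn ℂ (fun z => ∏ i ∈ s, f i z)
      (Metric.ball (0:ℂ) 1) := by
    intro s
    induction s using Finset.cons_induction with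
    | empty => simpa using differentiableOn_const (1:ℂ)
    | cons a s ha ih =>
      simp only [Finset.prod_cons]
      exact (hfac a).mul ih
  -- locally uniform convergence
  have hTLU : TendstoLocallyUniformlyOn (fun (s : Finset ι) z => ∏ i ∈ s, f i z)
      (fun z => ∏' n, f n z) atTop (Metric.ball (0:ℂ) 1) := by
    rw [tendstoLocallyUniformlyOn_iff_forall_isCompact Metric.isOpen_ball]
    intro K hK hKc
    rcases K.eq_empty_or_nonempty with rfl | hne
    · exact tendstoUniformlyOn_empty
    obtain ⟨z₀, hz₀K, hz₀⟩ := hKc.exists_isMaxOn hne continuous_norm.continuousOn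
    set r := ‖z₀‖ with hr
    have hr0 : 0 ≤ r := norm_nonneg _
    have hr1 : r < 1 := by
      have := hK hz₀K
      simpa [Complex.dist_eq] using mem_ball_zero_iff.1 this
    have hKr : ∀ z ∈ K, ‖z‖ ≤ r := fun z hz => hz₀ hz
    set c : ι → ℝ := fun n => (1 - ‖α n‖) * ((1 + r) / (1 - r)) with hcdef
    have hcs : Summable c := hsum.mul_right _
    set E := Real.exp (∑' n, c n) with hE
    rw [Metric.tendstoUniformlyOn_iff]
    intro ε hε
    have htail : Tendsto (fun s : Finset ι => ∑' n : {x // x ∉ s}, c n) atTop (nhds 0) :=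
      tendsto_tsum_compl_atTop_zero c
    have hcomp : Tendsto (fun t : ℝ => E * (Real.exp t - 1)) (nhds 0) (nhds 0) := by
      have h1 : Tendsto (fun t : ℝ => E * (Real.exp t - 1)) (nhds 0)
          (nhds (E * (Real.exp 0 - 1))) :=
        (tendsto_const_nhds.mul ((Real.continuous_exp.tendsto 0).sub tendsto_const_nhds))
      simpa using h1
    have hβ : Tendsto (fun s : Finset ι => E * (Real.exp (∑' n : {x // x ∉ s}, c n) - 1))
        atTop (nhds 0) := hcomp.comp htail
    filter_upwards [hβ.eventually (gt_mem_nhds hε)] with s hs z hzK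
    have hzr : ‖z‖ ≤ r := hKr z hzK
    have hzb : ‖z‖ < 1 := lt_of_le_of_lt hzr hr1
    have hm := hmult z hzb
    have hc0' : ∀ j : ι, (0:ℝ) ≤ c j := hc0 r hr0 hr1
    have hP : ‖∏ i ∈ s, f i z‖ ≤ E :=
      norm_prod_le_exp (fun n => hest r hr1 n z hzr) hcs s
    have hval : ∀ t : Finset ι, s ⊆ t →
        ‖(∏ i ∈ t, f i z) - ∏ i ∈ s, f i z‖ ≤
          E * (Real.exp (∑' n : {x // x ∉ s}, c n) - 1) := by
      intro t hst
      have hsplit : ∏ i ∈ t, f i z = (∏ i ∈ s, f i z) * ∏ i ∈ t \ s, f i z := by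
        rw [← Finset.prod_union Finset.disjoint_sdiff, Finset.union_sdiff_of_subset hst]
      have htb : ∑ i ∈ t \ s, ‖f i z - 1‖ ≤ ∑' n : {x // x ∉ s}, c n := by
        have hsets : (∑' n : {x // x ∉ s}, c n) =
            ∑' n, Set.indicator {x : ι | x ∉ s} c n :=
          tsum_subtype {x : ι | x ∉ s} c
        rw [hsets]
        refine le_trans ?_ (Summable.sum_le_tsum (t \ s)
          (fun i _ => Set.indicator_nonneg (fun j _ => hc0' j) i) (hcs.indicator _))
        apply Finset.sum_le_sum
        intro i hi
        have his : i ∈ {x : ι | x ∉ s} := (Finset.mem_sdiff.1 hi).2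
        rw [Set.indicator_of_mem his]
        exact hest r hr1 i z hzr
      calc ‖(∏ i ∈ t, f i z) - ∏ i ∈ s, f i z‖
          = ‖∏ i ∈ s, f i z‖ * ‖(∏ i ∈ t \ s, f i z) - 1‖ := by
            rw [hsplit, show (∏ i ∈ s, f i z) * (∏ i ∈ t \ s, f i z) - ∏ i ∈ s, f i z =
              (∏ i ∈ s, f i z) * ((∏ i ∈ t \ s, f i z) - 1) by ring, norm_mul]
        _ ≤ E * (Real.exp (∑' n : {x // x ∉ s}, c n) - 1) := by
            apply mul_le_mul hP ?_ (norm_nonneg _) (Real.exp_pos _).le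
            refine le_trans (norm_prod_sub_one_le _ _) ?_
            have := Real.exp_le_exp.2 htb
            linarith
    have hlim : Tendsto (fun t : Finset ι => ‖(∏ i ∈ t, f i z) - ∏ i ∈ s, f i z‖) atTop
        (nhds ‖(∏' n, f n z) - ∏ i ∈ s, f i z‖) :=
      (hm.hasProd.sub tendsto_const_nhds).norm
    have hfinal : ‖(∏' n, f n z) - ∏ i ∈ s, f i z‖ ≤
        E * (Real.exp (∑' n : {x // x ∉ s}, c n) - 1) :=
      le_of_tendsto hlim (Filter.eventually_atTop.2 ⟨s, hval⟩)
    rw [dist_eq_norm]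
    exact lt_of_le_of_lt hfinal hs
  have hg : DifferentiableOn ℂ (fun z => ∏' n, f n z) (Metric.ball (0:ℂ) 1) :=
    hTLU.differentiableOn (Filter.Eventually.of_forall hdiffF) Metric.isOpen_ball
  have hform : DifferentiableOn ℂ (fun z => lam * z ^ m * ∏' n, f n z)
      (Metric.ball (0:ℂ) 1) :=
    (((differentiableOn_const lam).mul (differentiable_pow m).differentiableOn)).mul hg
  exact hform.congr fun z hz => hBeq z hz

end Blaschke

/-- For a Blaschke product with Property 𝔅, B maps the closure of each component of a level
set onto the closed disk of radius δ, and the boundary onto the circle of radius δ. -/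
theorem stmt1 (B : ℂ → ℂ) (hB : IsBlaschkeProduct B) (hPB : PropertyB B)
    (δ : ℝ) (hδ : δ ∈ Set.Ioo (0:ℝ) 1)
    (Ω₀ : Set ℂ) (hΩ₀ : ∃ z ∈ levelSet B δ, Ω₀ = connectedComponentIn (levelSet B δ) z) :
    B '' closure Ω₀ = Metric.closedBall (0:ℂ) δ ∧
    B '' frontier Ω₀ = Metric.sphere (0:ℂ) δ := by
  classical
  obtain ⟨z₀, hz₀lev, rfl⟩ := hΩ₀
  obtain ⟨hδ0, hδ1⟩ := hδ
  have hBdiff : DifferentiableOn ℂ B (Metric.ball (0:ℂ) 1) := blaschke_differentiableOn B hB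
  have hBcont : ContinuousOn B (Metric.ball (0:ℂ) 1) := hBdiff.continuousOn
  set Ω : Set ℂ := connectedComponentIn (levelSet B δ) z₀ with hΩdef
  have hlev_sub : levelSet B δ ⊆ Metric.ball (0:ℂ) 1 := by
    intro z hz
    rw [mem_ball_zero_iff]
    exact hz.1
  have hlev_open : IsOpen (levelSet B δ) := by
    rw [isOpen_iff_mem_nhds]
    intro z hz
    have hz1 : z ∈ Metric.ball (0:ℂ) 1 := hlev_sub hz
    have hc : ContinuousAt B z := hBcont.continuousAt (Metric.isOpen_ball.mem_nhds hz1)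
    have hc' : ContinuousAt (fun w => ‖B w‖) z :=
      continuous_norm.continuousAt.comp hc
    have h1 : {w : ℂ | ‖B w‖ < δ} ∈ nhds z :=
      hc'.preimage_mem_nhds (isOpen_Iio.mem_nhds hz.2)
    have h2 : Metric.ball (0:ℂ) 1 ∈ nhds z := Metric.isOpen_ball.mem_nhds hz1
    filter_upwards [h1, h2] with w hw1 hw2
    exact ⟨by exact mem_ball_zero_iff.1 hw2, hw1⟩
  have hΩ_open : IsOpen Ω := hlev_open.connectedComponentIn
  have hz₀Ω : z₀ ∈ Ω := mem_connectedComponentIn hz₀lev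
  have hΩ_ne : Ω.Nonempty := ⟨z₀, hz₀Ω⟩
  have hΩ_sub_lev : Ω ⊆ levelSet B δ := connectedComponentIn_subset _ _
  have hcl : closure Ω ⊆ Metric.ball (0:ℂ) 1 := hPB δ ⟨hδ0, hδ1⟩ z₀ hz₀lev
  have hΩ_ball : Ω ⊆ Metric.ball (0:ℂ) 1 := fun z hz => hlev_sub (hΩ_sub_lev hz)
  have hK : IsCompact (closure Ω) :=
    (Metric.isBounded_ball.subset hΩ_ball).isCompact_closure
  have hcont_cl : ContinuousOn B (closure Ω) := hBcont.mono hcl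
  -- |B| ≤ δ on the closure
  have habs_le : ∀ z ∈ closure Ω, ‖B z‖ ≤ δ := by
    intro z hz
    have hzb : z ∈ Metric.ball (0:ℂ) 1 := hcl hz
    have hc : ContinuousAt (fun w => ‖B w‖) z :=
      continuous_norm.continuousAt.comp
        (hBcont.continuousAt (Metric.isOpen_ball.mem_nhds hzb))
    have hne : (nhdsWithin z Ω).NeBot := mem_closure_iff_nhdsWithin_neBot.1 hz
    have ht : Filter.Tendsto (fun w => ‖B w‖) (nhdsWithin z Ω)
        (nhds (‖B z‖)) := hc.tendsto.mono_left nhdsWithin_le_nhds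
    exact le_of_tendsto ht (eventually_nhdsWithin_of_forall fun w hw => (hΩ_sub_lev hw).2.le)
  have hfr_sub : frontier Ω ⊆ closure Ω := frontier_subset_closure
  have hfr_ball : frontier Ω ⊆ Metric.ball (0:ℂ) 1 := fun z hz => hcl (hfr_sub hz)
  have hfr_not : ∀ z ∈ frontier Ω, z ∉ Ω := by
    intro z hz hzΩ
    exact hz.2 (by rwa [hΩ_open.interior_eq])
  -- |B| = δ on the frontier
  have habs_fr : ∀ z ∈ frontier Ω, ‖B z‖ = δ := by
    intro z hz
    refine le_antisymm (habs_le z (hfr_sub hz)) ?_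
    by_contra h
    push_neg at h
    have hzlev : z ∈ levelSet B δ := by
      refine ⟨?_, h⟩
      exact mem_ball_zero_iff.1 (hfr_ball hz)
    have hCopen : IsOpen (connectedComponentIn (levelSet B δ) z) :=
      hlev_open.connectedComponentIn
    have hzC : z ∈ connectedComponentIn (levelSet B δ) z := mem_connectedComponentIn hzlev
    obtain ⟨p, hpC, hpΩ⟩ := mem_closure_iff.1 (hfr_sub hz) _ hCopen hzC
    have h1 : connectedComponentIn (levelSet B δ) z = connectedComponentIn (levelSet B δ) p :=
      connectedComponentIn_eq hpC
    have h2 : connectedComponentIn (levelSet B δ) z₀ = connectedComponentIn (levelSet B δ) p :=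
      connectedComponentIn_eq hpΩ
    refine hfr_not z hz ?_
    rw [hΩdef, h2, ← h1]
    exact hzC
  -- frontier is nonempty
  have hΩ_ne_univ : Ω ≠ Set.univ := by
    intro h
    have h2 : (2:ℂ) ∈ Metric.ball (0:ℂ) 1 := hΩ_ball (h ▸ Set.mem_univ (2:ℂ))
    rw [mem_ball_zero_iff] at h2
    norm_num at h2
  have hfr_ne : (frontier Ω).Nonempty := nonempty_frontier_iff.2 ⟨hΩ_ne, hΩ_ne_univ⟩
  -- open mapping
  have hana : AnalyticOnNhd ℂ B Ω := (hBdiff.mono hΩ_ball).analyticOnNhd hΩ_open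
  have hopen_map : ∀ s ⊆ Ω, IsOpen s → IsOpen (B '' s) := by
    rcases hana.is_constant_or_isOpen isPreconnected_connectedComponentIn with ⟨w, hw⟩ | h
    · exfalso
      obtain ⟨y, hy⟩ := hfr_ne
      have hyB : B y = w := by
        have hycl : y ∈ closure Ω := hfr_sub hy
        have hne : (nhdsWithin y Ω).NeBot := mem_closure_iff_nhdsWithin_neBot.1 hycl
        have ht1 : Filter.Tendsto B (nhdsWithin y Ω) (nhds (B y)) :=
          ((hBcont.continuousAt (Metric.isOpen_ball.mem_nhds (hcl hycl))).tendsto).mono_left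
            nhdsWithin_le_nhds
        have ht2 : Filter.Tendsto B (nhdsWithin y Ω) (nhds w) := by
          refine Filter.Tendsto.congr' ?_ tendsto_const_nhds
          exact (eventually_nhdsWithin_of_forall fun x hx => (hw x hx).symm)
        exact tendsto_nhds_unique ht1 ht2
      have h1 : ‖w‖ = δ := by rw [← hyB]; exact habs_fr y hy
      have h2 : ‖w‖ < δ := by
        rw [← hw z₀ hz₀Ω]
        exact hz₀lev.2
      linarith
    · exact h
  have hopenimg : IsOpen (B '' Ω) := hopen_map Ω subset_rfl hΩ_open
  have himgK_closed : IsClosed (B '' closure Ω) :=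
    (hK.image_of_continuousOn hcont_cl).isClosed
  have hcl_eq : closure Ω = Ω ∪ frontier Ω := closure_eq_self_union_frontier Ω
  have hsub1 : B '' closure Ω ⊆ Metric.closedBall (0:ℂ) δ := by
    rintro _ ⟨z, hz, rfl⟩
    rw [Metric.mem_closedBall, Complex.dist_eq, sub_zero]
    exact habs_le z hz
  -- the open ball is contained in the image of the closure
  have hkey : Metric.ball (0:ℂ) δ ⊆ B '' closure Ω := by
    intro w hw
    by_contra hnot
    have hcover : Metric.ball (0:ℂ) δ ⊆ B '' Ω ∪ (B '' closure Ω)ᶜ := by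
      intro v hv
      by_cases hvK : v ∈ B '' closure Ω
      · left
        obtain ⟨z, hz, rfl⟩ := hvK
        rw [hcl_eq] at hz
        rcases hz with h | h
        · exact ⟨z, h, rfl⟩
        · exfalso
          have h1 := habs_fr z h
          have h2 : ‖B z‖ < δ := by
            have := Metric.mem_ball.1 hv
            rwa [Complex.dist_eq, sub_zero] at this
          linarith
      · right; exact hvK
    have hne1 : (Metric.ball (0:ℂ) δ ∩ B '' Ω).Nonempty := by
      refine ⟨B z₀, ?_, ⟨z₀, hz₀Ω, rfl⟩⟩
      rw [Metric.mem_ball, Complex.dist_eq, sub_zero]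
      exact hz₀lev.2
    have hne2 : (Metric.ball (0:ℂ) δ ∩ (B '' closure Ω)ᶜ).Nonempty := ⟨w, hw, hnot⟩
    obtain ⟨v, hv1, hv2, hv3⟩ := (convex_ball (0:ℂ) δ).isPreconnected _ _ hopenimg
      himgK_closed.isOpen_compl hcover hne1 hne2
    exact hv3 (Set.image_mono subset_closure hv2)
  have hpart1 : B '' closure Ω = Metric.closedBall (0:ℂ) δ := by
    refine Set.Subset.antisymm hsub1 ?_
    rw [← closure_ball (0:ℂ) (ne_of_gt hδ0)]
    exact closure_minimal hkey himgK_closed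
  refine ⟨hpart1, ?_⟩
  apply Set.Subset.antisymm
  · rintro _ ⟨z, hz, rfl⟩
    rw [Metric.mem_sphere, Complex.dist_eq, sub_zero]
    exact habs_fr z hz
  · intro w hw
    have hwcl : w ∈ B '' closure Ω := by
      rw [hpart1]
      exact Metric.sphere_subset_closedBall hw
    obtain ⟨z, hz, rfl⟩ := hwcl
    rw [hcl_eq] at hz
    rcases hz with h | h
    · exfalso
      have h1 : ‖B z‖ < δ := (hΩ_sub_lev h).2
      have h2 : ‖B z‖ = δ := by
        have := Metric.mem_sphere.1 hw
        rwa [Complex.dist_eq, sub_zero] at this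
      linarith
    · exact ⟨z, h, rfl⟩

end
end

section
/- Let B be a Blaschke product with Property 𝔅 and let α be a zero of B. Then there exists θ ∈ (0,1) such that the connected component of the level set Ω_{B,θ} = {z ∈ 𝔻 : |B(z)| < θ} containing α contains no zero of B other than α. -/
noncomputable section

/-- Compatibility: the complex absolute value as an absolute value. -/
noncomputable def Complex.abs : AbsoluteValue ℂ ℝ where
  toFun z := ‖z‖
  map_mul' := norm_mul
  nonneg' := norm_nonneg
  eq_zero' _ := norm_eq_zero
  add_le' := norm_add_le

lemma Complex.norm_eq_abs (z : ℂ) : ‖z‖ = Complex.abs z := rfl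

lemma Complex.abs_conj (z : ℂ) : Complex.abs ((starRingEnd ℂ) z) = Complex.abs z :=
  Complex.norm_conj z

lemma Complex.abs_ofReal (r : ℝ) : Complex.abs (r : ℂ) = |r| := Complex.norm_real r

lemma Complex.continuous_abs : Continuous Complex.abs := continuous_norm

section BlaschkeAux
open Complex

noncomputable def bfac (w z : ℂ) : ℂ :=
  ((Complex.abs w : ℂ) / w) * ((w - z) / (1 - (starRingEnd ℂ) w * z))

lemma denom_lb {w z : ℂ} (hw : Complex.abs w ≤ 1) {r : ℝ} (hz : Complex.abs z ≤ r) (hr : r < 1) :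
    1 - r ≤ Complex.abs (1 - (starRingEnd ℂ) w * z) := by
  have h1 : Complex.abs ((starRingEnd ℂ) w * z) ≤ r := by
    rw [map_mul, Complex.abs_conj]
    calc Complex.abs w * Complex.abs z ≤ 1 * r :=
          mul_le_mul hw hz (Complex.abs.nonneg z) zero_le_one
      _ = r := one_mul r
  have h2 : ‖(1:ℂ)‖ - ‖(starRingEnd ℂ) w * z‖ ≤ ‖1 - (starRingEnd ℂ) w * z‖ :=
    norm_sub_norm_le _ _
  simp only [Complex.norm_eq_abs, norm_one] at h2
  linarith

lemma denom_ne {w z : ℂ} (hw : Complex.abs w ≤ 1) {r : ℝ} (hz : Complex.abs z ≤ r) (hr : r < 1) :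
    1 - (starRingEnd ℂ) w * z ≠ 0 := by
  intro h
  have := denom_lb hw hz hr
  rw [h, map_zero] at this
  linarith

lemma bfac_diffAt {w : ℂ} (hw : Complex.abs w ≤ 1) {r : ℝ} {z : ℂ}
    (hz : Complex.abs z ≤ r) (hr : r < 1) :
    DifferentiableAt ℂ (fun x => bfac w x) z := by
  apply DifferentiableAt.const_mul
  apply DifferentiableAt.div
  · exact (differentiableAt_const _).sub differentiableAt_id
  · exact (differentiableAt_const _).sub ((differentiableAt_const _).mul differentiableAt_id)
  · exact denom_ne hw hz hr

lemma bfac_ne_zero {w z : ℂ} (hw : Complex.abs w ≤ 1) (hw0 : w ≠ 0) {r : ℝ}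
    (hz : Complex.abs z ≤ r) (hr : r < 1) (hne : z ≠ w) : bfac w z ≠ 0 := by
  apply mul_ne_zero
  · exact div_ne_zero (Complex.ofReal_ne_zero.mpr (Complex.abs.ne_zero hw0)) hw0
  · exact div_ne_zero (sub_ne_zero.mpr (Ne.symm hne)) (denom_ne hw hz hr)

lemma bfac_eq_zero {w : ℂ} : bfac w w = 0 := by simp [bfac]

lemma bfac_sub_one (w z : ℂ) (hw0 : w ≠ 0) (hd : 1 - (starRingEnd ℂ) w * z ≠ 0) :
    1 - bfac w z = ((1 - (Complex.abs w : ℂ)) * (w + z * (Complex.abs w : ℂ)))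
      / (w * (1 - (starRingEnd ℂ) w * z)) := by
  have hc : (starRingEnd ℂ) w * w = ((Complex.abs w : ℂ))^2 := by
    rw [mul_comm, Complex.mul_conj']
    simp [Complex.norm_eq_abs]
  rw [bfac, div_mul_div_comm, one_sub_div (mul_ne_zero hw0 hd)]
  congr 1
  linear_combination (-z) * hc

lemma bfac_bound {w z : ℂ} (hw : Complex.abs w ≤ 1) (hw0 : w ≠ 0) {r : ℝ}
    (hz : Complex.abs z ≤ r) (hr : r < 1) :
    Complex.abs (1 - bfac w z) ≤ (2 / (1 - r)) * (1 - Complex.abs w) := by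
  have hd := denom_ne hw hz hr
  rw [bfac_sub_one w z hw0 hd, map_div₀, map_mul, map_mul]
  set A := Complex.abs w with hA
  set D := Complex.abs (1 - (starRingEnd ℂ) w * z) with hD
  set N := Complex.abs (w + z * (A : ℂ)) with hN
  have hA0 : 0 < A := Complex.abs.pos hw0
  have hdl : 1 - r ≤ D := denom_lb hw hz hr
  have hD0 : 0 < D := lt_of_lt_of_le (by linarith) hdl
  have hnum2 : N ≤ 2 * A := by
    calc N ≤ Complex.abs w + Complex.abs (z * (A : ℂ)) := Complex.abs.add_le _ _
      _ = A + Complex.abs z * A := by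
          rw [map_mul, Complex.abs_ofReal, _root_.abs_of_nonneg hA0.le]
      _ ≤ A + 1 * A := by nlinarith [Complex.abs.nonneg z]
      _ = 2 * A := by ring
  have h1 : Complex.abs (1 - (A : ℂ)) = 1 - A := by
    rw [show (1 : ℂ) - (A : ℂ) = ((1 - A : ℝ) : ℂ) by push_cast; ring]
    rw [Complex.abs_ofReal, _root_.abs_of_nonneg (by linarith)]
  rw [h1]
  rw [div_le_iff₀ (by positivity)]
  have hr1 : (0:ℝ) < 1 - r := by linarith
  have hc : (0:ℝ) < 2 / (1 - r) := by positivity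
  have s1 : 2 / (1-r) * ((1-r) * A) = 2 * A := by
    rw [div_mul_eq_mul_div, mul_comm (1-r) A, ← mul_assoc, mul_div_assoc,
      div_self hr1.ne', mul_one]
  have s2 : 2 / (1-r) * ((1-r) * A) ≤ 2 / (1-r) * (D * A) :=
    mul_le_mul_of_nonneg_left (mul_le_mul_of_nonneg_right hdl hA0.le) hc.le
  have s3 : N ≤ 2 / (1-r) * (D * A) := by linarith
  have h1A : 0 ≤ 1 - A := by linarith
  calc (1 - A) * N ≤ (1 - A) * (2 / (1-r) * (D * A)) := mul_le_mul_of_nonneg_left s3 h1A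
    _ = 2 / (1 - r) * (1 - A) * (A * D) := by ring

lemma blaschke_r {ι : Type} [Countable ι] (a : ι → ℂ)
    (ha : ∀ n, Complex.abs (a n) < 1 ∧ a n ≠ 0)
    (hsum : Summable fun n => 1 - Complex.abs (a n)) {r : ℝ} (hr0 : 0 < r) (hr : r < 1) :
    DifferentiableOn ℂ (fun z => ∏' n, bfac (a n) z) (Metric.ball (0:ℂ) r) ∧
    (∀ z : ℂ, Complex.abs z ≤ r → (∀ n, z ≠ a n) → (∏' n, bfac (a n) z) ≠ 0) := by
  have hr1 : (0:ℝ) < 1 - r := by linarith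
  set s : Set ι := {n | (1 - r)/4 ≤ 1 - Complex.abs (a n)} with hs_def
  have hs : s.Finite := by
    have h2 : ∀ᶠ n in Filter.cofinite, 1 - Complex.abs (a n) < (1-r)/4 :=
      hsum.tendsto_cofinite_zero.eventually_lt_const (by positivity)
    exact Set.Finite.subset (Filter.eventually_cofinite.mp h2) (fun n hn => not_lt.mpr hn)
  -- bound on tail factors
  have htail : ∀ n, n ∉ s → ∀ z : ℂ, Complex.abs z ≤ r →
      Complex.abs (1 - bfac (a n) z) ≤ 1/2 := by
    intro n hn z hz
    have hb := bfac_bound (le_of_lt (ha n).1) (ha n).2 hz hr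
    have hlt : 1 - Complex.abs (a n) < (1-r)/4 := not_le.mp hn
    have hc : (0:ℝ) < 2 / (1 - r) := by positivity
    have : (2/(1-r)) * (1 - Complex.abs (a n)) ≤ (2/(1-r)) * ((1-r)/4) :=
      mul_le_mul_of_nonneg_left hlt.le hc.le
    have he : (2/(1-r)) * ((1-r)/4) = 1/2 := by
      field_simp
      norm_num
    linarith
  have hne : ∀ n, n ∉ s → ∀ z : ℂ, Complex.abs z ≤ r → bfac (a n) z ≠ 0 := by
    intro n hn z hz h0
    have := htail n hn z hz
    rw [h0, sub_zero, map_one] at this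
    linarith
  have hslit : ∀ n, n ∉ s → ∀ z : ℂ, Complex.abs z ≤ r → bfac (a n) z ∈ Complex.slitPlane := by
    intro n hn z hz
    have h1 : ‖bfac (a n) z - 1‖ < 1 := by
      rw [Complex.norm_eq_abs, Complex.abs.map_sub]
      linarith [htail n hn z hz]
    have := Complex.mem_slitPlane_of_norm_lt_one h1
    rwa [show (1:ℂ) + (bfac (a n) z - 1) = bfac (a n) z from by ring] at this
  have hlog : ∀ n, n ∉ s → ∀ z : ℂ, Complex.abs z ≤ r →
      ‖Complex.log (bfac (a n) z)‖ ≤ 3/2 * (2/(1-r) * (1 - Complex.abs (a n))) := by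
    intro n hn z hz
    have h12 : ‖bfac (a n) z - 1‖ ≤ 1/2 := by
      rw [Complex.norm_eq_abs, Complex.abs.map_sub]
      exact htail n hn z hz
    have := Complex.norm_log_one_add_half_le_self h12
    rw [show (1:ℂ) + (bfac (a n) z - 1) = bfac (a n) z from by ring] at this
    refine le_trans this ?_
    have hb : ‖bfac (a n) z - 1‖ ≤ 2/(1-r) * (1 - Complex.abs (a n)) := by
      rw [Complex.norm_eq_abs, Complex.abs.map_sub]
      exact bfac_bound (le_of_lt (ha n).1) (ha n).2 hz hr
    nlinarith [norm_nonneg (bfac (a n) z - 1)]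
  -- summable bound
  have hu : Summable (fun n : ↥sᶜ => 3/2 * (2/(1-r) * (1 - Complex.abs (a n.1)))) :=
    ((hsum.mul_left (2/(1-r))).mul_left (3/2)).subtype _
  -- the tail log sum
  set L : ℂ → ℂ := fun z => ∑' n : ↥sᶜ, Complex.log (bfac (a n.1) z) with hL_def
  have hLd : DifferentiableOn ℂ L (Metric.ball (0:ℂ) r) := by
    refine differentiableOn_tsum_of_summable_norm hu ?_ Metric.isOpen_ball ?_
    · intro i z hz
      have hzr : Complex.abs z ≤ r :=
        le_of_lt (by simpa [Complex.norm_eq_abs] using mem_ball_zero_iff.mp hz)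
      exact ((bfac_diffAt (le_of_lt (ha i.1).1) hzr hr).clog
        (hslit i.1 i.2 z hzr)).differentiableWithinAt
    · intro i w hw
      exact hlog i.1 i.2 w
        (le_of_lt (by simpa [Complex.norm_eq_abs] using mem_ball_zero_iff.mp hw))
  -- multipliability and exp formula for the tail
  have hc_mult : (∀ z : ℂ, Complex.abs z ≤ r → Multipliable (fun n : ↥sᶜ => bfac (a n.1) z)) ∧
      (∀ z : ℂ, Complex.abs z ≤ r →
        Complex.exp (L z) = ∏' n : ↥sᶜ, bfac (a n.1) z) := by
    set T := {x : ℂ // Complex.abs x ≤ r}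
    set F : ↥sᶜ → T → ℂ := fun n x => bfac (a n.1) x.1 with hF
    have hFn : ∀ (x : T) (n : ↥sᶜ), F n x ≠ 0 := fun x n => hne n.1 n.2 x.1 x.2
    have hFs : ∀ x : T, Summable fun n => Complex.log (F n x) := fun x =>
      Summable.of_norm_bounded hu (fun n => hlog n.1 n.2 x.1 x.2)
    constructor
    · exact fun z hz => Complex.multipliable_of_summable_log (hFs ⟨z, hz⟩)
    · intro z hz
      have := (Complex.cexp_tsum_eq_tprod (fun n => hFn ⟨z, hz⟩ n) (hFs ⟨z, hz⟩))
      exact this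
  -- splitting of the product
  have key : ∀ z : ℂ, Complex.abs z ≤ r →
      (∏' n, bfac (a n) z) = (∏' n : ↥s, bfac (a n.1) z) * Complex.exp (L z) := by
    intro z hz
    haveI := hs.to_subtype
    rw [(hc_mult.2 z hz),
      ← Multipliable.tprod_mul_tprod_compl (f := fun n => bfac (a n) z) Multipliable.of_finite
        (hc_mult.1 z hz)]
  constructor
  · have hEq : Set.EqOn (fun z => (∏' n : ↥s, bfac (a n.1) z) * Complex.exp (L z))
        (fun z => ∏' n, bfac (a n) z) (Metric.ball (0:ℂ) r) := by
      intro z hz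
      exact (key z (le_of_lt (by simpa [Complex.norm_eq_abs] using mem_ball_zero_iff.mp hz))).symm
    refine DifferentiableOn.congr ?_ hEq.symm
    apply DifferentiableOn.mul
    · haveI := hs.fintype
      have hfe : (fun z : ℂ => ∏' n : ↥s, bfac (a n.1) z)
          = fun z : ℂ => ∏ n : ↥s, bfac (a n.1) z := by
        funext z; exact tprod_fintype _
      rw [hfe]
      intro z hz
      have hzr : Complex.abs z ≤ r :=
        le_of_lt (by simpa [Complex.norm_eq_abs] using mem_ball_zero_iff.mp hz)
      exact (DifferentiableAt.fun_finsetProd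
        (fun i _ => bfac_diffAt (le_of_lt (ha i.1).1) hzr hr)).differentiableWithinAt
    · exact hLd.cexp
  · intro z hz hzne
    rw [key z hz]
    apply mul_ne_zero
    · haveI := hs.fintype
      rw [tprod_fintype]
      exact Finset.prod_ne_zero_iff.mpr
        (fun n _ => bfac_ne_zero (le_of_lt (ha n.1).1) (ha n.1).2 hz hr (hzne n.1))
    · exact Complex.exp_ne_zero _

lemma blaschke_main {ι : Type} [Countable ι] (a : ι → ℂ)
    (ha : ∀ n, Complex.abs (a n) < 1 ∧ a n ≠ 0)
    (hsum : Summable fun n => 1 - Complex.abs (a n)) :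
    (∀ z ∈ Metric.ball (0:ℂ) 1, DifferentiableAt ℂ (fun x => ∏' n, bfac (a n) x) z) ∧
    (∀ z ∈ Metric.ball (0:ℂ) 1, (∀ n, z ≠ a n) → (∏' n, bfac (a n) z) ≠ 0) := by
  have habs : ∀ z : ℂ, z ∈ Metric.ball (0:ℂ) 1 → Complex.abs z < 1 := by
    intro z hz
    rw [← Complex.norm_eq_abs]
    exact mem_ball_zero_iff.mp hz
  constructor
  · intro z hz
    have hz1 := habs z hz
    have h0 := Complex.abs.nonneg z
    have hr0 : 0 < (Complex.abs z + 1)/2 := by linarith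
    have hr1 : (Complex.abs z + 1)/2 < 1 := by linarith
    have hd := (blaschke_r a ha hsum hr0 hr1).1
    refine hd.differentiableAt (Metric.isOpen_ball.mem_nhds ?_)
    rw [mem_ball_zero_iff, Complex.norm_eq_abs]
    linarith
  · intro z hz hne
    have hz1 := habs z hz
    have h0 := Complex.abs.nonneg z
    have hr0 : 0 < (Complex.abs z + 1)/2 := by linarith
    have hr1 : (Complex.abs z + 1)/2 < 1 := by linarith
    exact (blaschke_r a ha hsum hr0 hr1).2 z (by linarith) hne

end BlaschkeAux

/-- For a Blaschke product with Property 𝔅 and a zero α of B, there exists θ ∈ (0,1) such that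
the component of Ω_{B,θ} containing α contains no other zero of B. -/
theorem stmt3 (B : ℂ → ℂ) (hB : IsBlaschkeProduct B) (hPB : PropertyB B)
    (α : ℂ) (hα : α ∈ Metric.ball (0:ℂ) 1) (hBα : B α = 0) :
    ∃ θ ∈ Set.Ioo (0:ℝ) 1,
      ∀ β ∈ connectedComponentIn (levelSet B θ) α, B β = 0 → β = α := by
  classical
  obtain ⟨ι, hι, m, lam, a, hlam, ha, hsum, hform⟩ := hB
  haveI := hι
  set g : ℂ → ℂ := fun z => lam * z ^ m * ∏' n, bfac (a n) z with hg_def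
  have hBg : ∀ z ∈ Metric.ball (0:ℂ) 1, B z = g z := by
    intro z hz
    rw [hform z hz, hg_def]
    simp only [bfac, Complex.norm_eq_abs]
  have hmain := blaschke_main a ha hsum
  have hgd : ∀ z ∈ Metric.ball (0:ℂ) 1, DifferentiableAt ℂ g z := by
    intro z hz
    exact ((differentiableAt_const lam).mul (differentiableAt_pow m)).mul (hmain.1 z hz)
  have hlam0 : lam ≠ 0 := by
    intro h; rw [h, norm_zero] at hlam; norm_num at hlam
  have hnz : ∀ z ∈ Metric.ball (0:ℂ) 1, z ≠ 0 → (∀ n, z ≠ a n) → g z ≠ 0 := by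
    intro z hz hz0 hzn
    exact mul_ne_zero (mul_ne_zero hlam0 (pow_ne_zero m hz0)) (hmain.2 z hz hzn)
  have habs : ∀ z : ℂ, z ∈ Metric.ball (0:ℂ) 1 ↔ Complex.abs z < 1 := by
    intro z
    rw [← Complex.norm_eq_abs]
    exact mem_ball_zero_iff
  have hα1 : Complex.abs α < 1 := (habs α).mp hα
  -- g is analytic at α
  have hgdOn : DifferentiableOn ℂ g (Metric.ball (0:ℂ) 1) :=
    fun z hz => (hgd z hz).differentiableWithinAt
  have hana : AnalyticAt ℂ g α := hgdOn.analyticAt (Metric.isOpen_ball.mem_nhds hα)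
  rcases hana.eventually_eq_zero_or_eventually_ne_zero with h0 | hne
  · -- g vanishes on a neighborhood: contradiction with countable zero set
    exfalso
    rw [Metric.eventually_nhds_iff] at h0
    obtain ⟨ε, hε, hball⟩ := h0
    set t := min (ε/2) ((1 - Complex.abs α)/2) with ht_def
    have ht : 0 < t := lt_min (by linarith) (by linarith)
    have hsub : Metric.ball α t ⊆ {(0:ℂ)} ∪ Set.range a := by
      intro y hy
      have hyd : dist y α < ε :=
        lt_of_lt_of_le (Metric.mem_ball.mp hy) (le_trans (min_le_left _ _) (by linarith))
      have hy1 : y ∈ Metric.ball (0:ℂ) 1 := by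
        rw [habs]
        have h1 : Complex.abs (y - α) < (1 - Complex.abs α)/2 :=
          lt_of_lt_of_le (by rw [← Complex.norm_eq_abs, ← Complex.dist_eq]; exact Metric.mem_ball.mp hy)
            (min_le_right _ _)
        calc Complex.abs y = Complex.abs (y - α + α) := by ring_nf
          _ ≤ Complex.abs (y - α) + Complex.abs α := Complex.abs.add_le _ _
          _ < 1 := by linarith
      have hgy : g y = 0 := hball hyd
      by_contra hmem
      simp only [Set.mem_union, Set.mem_singleton_iff, Set.mem_range] at hmem
      push_neg at hmem
      exact hnz y hy1 hmem.1 (fun n h => hmem.2 n h.symm) hgy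
    have hcnt : ({(0:ℂ)} ∪ Set.range a).Countable :=
      (Set.countable_singleton 0).union (Set.countable_range a)
    have h1 : MeasureTheory.volume (Metric.ball α t) = 0 :=
      le_antisymm (le_trans (MeasureTheory.measure_mono hsub)
        (le_of_eq (hcnt.measure_zero _))) zero_le
    exact (Metric.measure_ball_pos _ α ht).ne' h1
  · -- isolated zero: build θ
    rw [eventually_nhdsWithin_iff, Metric.eventually_nhds_iff] at hne
    obtain ⟨ε, hε, hball⟩ := hne
    set ρ := min (ε/2) ((1 - Complex.abs α)/2) with hρ_def
    have hρ : 0 < ρ := lt_min (by linarith) (by linarith)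
    have hsubcb : Metric.closedBall α ρ ⊆ Metric.ball (0:ℂ) 1 := by
      intro y hy
      rw [habs]
      have h1 : Complex.abs (y - α) ≤ (1 - Complex.abs α)/2 :=
        le_trans (by rw [← Complex.norm_eq_abs, ← Complex.dist_eq]; exact Metric.mem_closedBall.mp hy)
          (min_le_right _ _)
      calc Complex.abs y = Complex.abs (y - α + α) := by ring_nf
        _ ≤ Complex.abs (y - α) + Complex.abs α := Complex.abs.add_le _ _
        _ < 1 := by linarith
    have hnz' : ∀ y ∈ Metric.closedBall α ρ, y ≠ α → g y ≠ 0 := by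
      intro y hy hyα
      refine hball ?_ (by simpa using hyα)
      exact lt_of_le_of_lt (Metric.mem_closedBall.mp hy)
        (lt_of_le_of_lt (min_le_left _ _) (by linarith))
    -- minimum of |g| on the sphere
    have hSne : (Metric.sphere α ρ).Nonempty := NormedSpace.sphere_nonempty.mpr hρ.le
    have hScont : ContinuousOn (fun y => Complex.abs (g y)) (Metric.sphere α ρ) := by
      intro y hy
      exact (Complex.continuous_abs.continuousAt.comp
        (hgd y (hsubcb (Metric.sphere_subset_closedBall hy))).continuousAt).continuousWithinAt
    obtain ⟨x0, hx0S, hx0min⟩ := (isCompact_sphere α ρ).exists_isMinOn hSne hScont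
    have hx0α : x0 ≠ α := by
      intro h
      have := Metric.mem_sphere.mp hx0S
      rw [h, dist_self] at this
      exact hρ.ne' this.symm
    have hε₀ : 0 < Complex.abs (g x0) :=
      Complex.abs.pos (hnz' x0 (Metric.sphere_subset_closedBall hx0S) hx0α)
    set ε₀ := Complex.abs (g x0) with hε₀_def
    refine ⟨min (ε₀/2) (1/2), ⟨lt_min (by linarith) (by norm_num),
      lt_of_le_of_lt (min_le_right _ _) (by norm_num)⟩, ?_⟩
    set θ := min (ε₀/2) (1/2) with hθ_def
    intro β hβ hBβ
    set C := connectedComponentIn (levelSet B θ) α with hC_def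
    have hαL : α ∈ levelSet B θ := by
      refine ⟨hα1, ?_⟩
      rw [hBα, norm_zero]
      exact lt_min (by linarith) (by norm_num)
    have hCsub : C ⊆ levelSet B θ := connectedComponentIn_subset _ _
    have hCsphere : ∀ y ∈ C, y ∉ Metric.sphere α ρ := by
      intro y hy hyS
      have hyL := hCsub hy
      have hy1 : y ∈ Metric.ball (0:ℂ) 1 := (habs y).mpr hyL.1
      have hyg : B y = g y := hBg y hy1
      have hmin : ε₀ ≤ Complex.abs (g y) := hx0min hyS
      have hlt : Complex.abs (B y) < θ := hyL.2
      rw [hyg] at hlt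
      have : θ ≤ ε₀/2 := min_le_left _ _
      linarith
    have hCball : C ⊆ Metric.ball α ρ := by
      have hpre : IsPreconnected C := isPreconnected_connectedComponentIn
      have hCUV : C ⊆ Metric.ball α ρ ∪ (Metric.closedBall α ρ)ᶜ := by
        intro y hy
        rcases lt_trichotomy (dist y α) ρ with h | h | h
        · exact Or.inl (Metric.mem_ball.mpr h)
        · exact absurd (Metric.mem_sphere.mpr h) (hCsphere y hy)
        · exact Or.inr (fun hc => absurd (Metric.mem_closedBall.mp hc) (not_le.mpr h))
      have hempty : ¬ (C ∩ (Metric.closedBall α ρ)ᶜ).Nonempty := by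
        intro hne'
        obtain ⟨w, hwC, hwU, hwV⟩ := hpre (Metric.ball α ρ) (Metric.closedBall α ρ)ᶜ
          Metric.isOpen_ball Metric.isClosed_closedBall.isOpen_compl hCUV
          ⟨α, mem_connectedComponentIn hαL, Metric.mem_ball_self hρ⟩ hne'
        exact hwV (Metric.ball_subset_closedBall hwU)
      intro y hy
      rcases hCUV hy with h | h
      · exact h
      · exact absurd ⟨y, hy, h⟩ hempty
    by_contra hβα
    have hβcb : β ∈ Metric.closedBall α ρ := Metric.ball_subset_closedBall (hCball hβ)
    have : B β = g β := hBg β (hsubcb hβcb)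
    exact hnz' β hβcb hβα (this ▸ hBβ)


end
end

section
/- Let B be an inner function with η-weak Property 𝔥 for some η ∈ (0,1). Then each connected component of the level set Ω_{B,η} = {z ∈ 𝔻 : |B(z)| < η} contains at least one zero of B, and the number of zeros of B (counted with multiplicity) in each connected component of Ω_{B,η} is at most (ln η)/(ln δ_{B,η}). -/
noncomputable section

/- ==== auxiliary lemmas for stmt8 ==== -/

open Metric Set Filter Function in
private lemma stmt8_normSq_id (z w : ℂ) :
    Complex.normSq (1 - (starRingEnd ℂ) z * w) - Complex.normSq (z - w)
    = (1 - Complex.normSq z) * (1 - Complex.normSq w) := by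
  simp [Complex.normSq_apply, Complex.sub_re, Complex.sub_im]; ring

open Metric Set Filter Function in
private lemma stmt8_abs_sub_le (z w : ℂ) (hz : ‖z‖ ≤ 1) (hw : ‖w‖ ≤ 1) :
    ‖z - w‖ ≤ ‖1 - (starRingEnd ℂ) z * w‖ := by
  have h1 : Complex.normSq z ≤ 1 := by
    rw [← Complex.sq_norm]; nlinarith [norm_nonneg z]
  have h2 : Complex.normSq w ≤ 1 := by
    rw [← Complex.sq_norm]; nlinarith [norm_nonneg w]
  have := stmt8_normSq_id z w
  have hsq : Complex.normSq (z - w) ≤ Complex.normSq (1 - (starRingEnd ℂ) z * w) := by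
    nlinarith
  have := norm_nonneg (z - w)
  have := norm_nonneg (1 - (starRingEnd ℂ) z * w)
  nlinarith [Complex.sq_norm (z - w), Complex.sq_norm (1 - (starRingEnd ℂ) z * w)]

open Metric Set Filter Function in
private lemma stmt8_sphere_ineq {a z : ℂ} {r : ℝ} (har : ‖a‖ < r)
    (hz : ‖z‖ = r) (hr : r < 1) :
    (r - ‖a‖) * ‖1 - (starRingEnd ℂ) a * z‖
      ≤ (1 - ‖a‖ * r) * ‖z - a‖ := by
  set s := ‖a‖ with hs
  have hs0 : 0 ≤ s := norm_nonneg a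
  have hsr : s < r := har
  set t := ((starRingEnd ℂ) a * z).re with ht
  have htle : t ≤ s * r := by
    calc t ≤ ‖(starRingEnd ℂ) a * z‖ := Complex.re_le_norm _
    _ = s * r := by rw [norm_mul, Complex.norm_conj, hz]
  have h1 : Complex.normSq (1 - (starRingEnd ℂ) a * z) = 1 - 2 * t + s ^ 2 * r ^ 2 := by
    have : Complex.normSq ((starRingEnd ℂ) a * z) = s ^ 2 * r ^ 2 := by
      rw [← Complex.sq_norm, norm_mul, Complex.norm_conj, hz]; ring
    rw [← this]
    simp [Complex.normSq_apply, Complex.sub_re, Complex.sub_im, ht]; ring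
  have h2 : Complex.normSq (z - a) = r ^ 2 - 2 * t + s ^ 2 := by
    have hz2 : Complex.normSq z = r ^ 2 := by rw [← Complex.sq_norm, hz]
    have ha2 : Complex.normSq a = s ^ 2 := by rw [← Complex.sq_norm]
    rw [← hz2, ← ha2]
    simp [Complex.normSq_apply, Complex.sub_re, Complex.sub_im, ht, Complex.conj_re,
      Complex.conj_im]
    ring
  have key : (r - s) ^ 2 * Complex.normSq (1 - (starRingEnd ℂ) a * z)
      ≤ (1 - s * r) ^ 2 * Complex.normSq (z - a) := by
    rw [h1, h2]
    have hid : (1 - s*r)^2*(r^2-2*t+s^2) - (r-s)^2*(1-2*t+s^2*r^2)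
        = 2*(1-r^2)*(1-s^2)*(s*r - t) := by ring
    nlinarith [mul_nonneg (mul_nonneg (by nlinarith : (0:ℝ) ≤ 2*(1-r^2))
      (by nlinarith : (0:ℝ) ≤ 1 - s^2)) (by nlinarith : (0:ℝ) ≤ s*r - t)]
  have e1 := Complex.sq_norm (1 - (starRingEnd ℂ) a * z)
  have e2 := Complex.sq_norm (z - a)
  have hA := norm_nonneg (1 - (starRingEnd ℂ) a * z)
  have hB := norm_nonneg (z - a)
  nlinarith [sq_nonneg ((r - s) * ‖1 - (starRingEnd ℂ) a * z‖
    + (1 - s*r) * ‖z - a‖),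
    mul_nonneg (sub_nonneg.2 hsr.le) hA, mul_nonneg (by nlinarith : (0:ℝ) ≤ 1 - s*r) hB]

open Metric Set Filter Function in
private lemma stmt8_one_sub_ne {a z : ℂ} (ha : ‖a‖ < 1) (hz : ‖z‖ < 1) :
    1 - (starRingEnd ℂ) a * z ≠ 0 := by
  intro h
  have : ‖(starRingEnd ℂ) a * z‖ < 1 := by
    rw [norm_mul, Complex.norm_conj]
    nlinarith [norm_nonneg a, norm_nonneg z]
  rw [sub_eq_zero] at h
  rw [← h] at this
  simp at this

open Metric Set Filter Function in
private lemma stmt8_quotient_bound {g g₁ : ℂ → ℂ} {a : ℂ} (ha : ‖a‖ < 1)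
    (hg₁ : DifferentiableOn ℂ g₁ (ball 0 1))
    (hgb : ∀ z ∈ ball (0:ℂ) 1, ‖g z‖ ≤ 1)
    (heq : ∀ z ∈ ball (0:ℂ) 1, g z = ((a - z) / (1 - (starRingEnd ℂ) a * z)) * g₁ z) :
    ∀ z ∈ ball (0:ℂ) 1, ‖g₁ z‖ ≤ 1 := by
  intro z₀ hz₀
  rw [mem_ball_zero_iff] at hz₀
  set s := ‖a‖ with hs
  have hs0 : 0 ≤ s := norm_nonneg a
  have main : ∀ r ∈ Ioo (max ‖z₀‖ s) 1, ‖g₁ z₀‖ ≤ (1 - s * r) / (r - s) := by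
    intro r hr
    obtain ⟨hr1, hr2⟩ := hr
    have hrs : s < r := lt_of_le_of_lt (le_max_right _ _) hr1
    have hz₀r : ‖z₀‖ < r := lt_of_le_of_lt (le_max_left _ _) hr1
    have hr0 : 0 < r := lt_of_le_of_lt hs0 hrs
    have hsub : ball (0:ℂ) r ⊆ ball 0 1 := ball_subset_ball hr2.le
    have hclsub : closure (ball (0:ℂ) r) ⊆ ball 0 1 := by
      rw [closure_ball (0:ℂ) hr0.ne']
      exact closedBall_subset_ball hr2
    have hdc : DiffContOnCl ℂ g₁ (ball 0 r) :=
      ⟨hg₁.mono hsub, (hg₁.continuousOn).mono hclsub⟩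
    have hfr : ∀ ζ ∈ frontier (ball (0:ℂ) r), ‖g₁ ζ‖ ≤ (1 - s * r) / (r - s) := by
      intro ζ hζ
      rw [frontier_ball (0:ℂ) hr0.ne'] at hζ
      have hζr : ‖ζ‖ = r := by simpa using hζ
      have hζ1 : ζ ∈ ball (0:ℂ) 1 := by
        rw [mem_ball_zero_iff]; rw [show ‖ζ‖ = ‖ζ‖ from rfl, hζr]; exact hr2
      have hne1 : 1 - (starRingEnd ℂ) a * ζ ≠ 0 :=
        stmt8_one_sub_ne ha (by rw [mem_ball_zero_iff] at hζ1; exact hζ1)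
      have hne2 : a - ζ ≠ 0 := by
        intro h
        rw [sub_eq_zero] at h
        have := hrs
        rw [hs, h, hζr] at this
        exact lt_irrefl _ this
      have := heq ζ hζ1
      have hg₁ζ : g₁ ζ = g ζ * (1 - (starRingEnd ℂ) a * ζ) / (a - ζ) := by
        rw [eq_div_iff hne2, this, div_mul_eq_mul_div, div_mul_cancel₀ _ hne1]
        ring
      rw [show ‖g₁ ζ‖ = ‖g₁ ζ‖ from rfl, hg₁ζ]
      rw [norm_div, norm_mul]
      rw [div_le_div_iff₀ (norm_pos_iff.mpr hne2) (by nlinarith)]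
      have h1 : ‖g ζ‖ ≤ 1 := hgb ζ hζ1
      have h2 := stmt8_sphere_ineq (show ‖a‖ < r from hrs) hζr hr2
      have h3 : ‖a - ζ‖ = ‖ζ - a‖ := norm_sub_rev a ζ
      rw [h3]
      calc ‖g ζ‖ * ‖1 - (starRingEnd ℂ) a * ζ‖ * (r - s)
          ≤ ‖1 - (starRingEnd ℂ) a * ζ‖ * (r - s) := by
            nlinarith [mul_nonneg (mul_nonneg (sub_nonneg.2 h1)
              (norm_nonneg (1 - (starRingEnd ℂ) a * ζ))) (by nlinarith : (0:ℝ) ≤ r - s)]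
        _ ≤ (1 - s * r) * ‖ζ - a‖ := by nlinarith [h2]
    have := Complex.norm_le_of_forall_mem_frontier_norm_le (isBounded_ball) hdc hfr
      (z := z₀) (subset_closure (mem_ball_zero_iff.mpr hz₀r))
    exact this
  have h1s : (0:ℝ) < 1 - s := by nlinarith
  have hlim : Tendsto (fun r : ℝ => (1 - s * r) / (r - s)) (nhdsWithin 1 (Iio 1)) (nhds 1) := by
    have hc : ContinuousAt (fun r : ℝ => (1 - s * r) / (r - s)) 1 := by
      apply ContinuousAt.div (by fun_prop) (by fun_prop)
      intro h
      simp only [sub_eq_zero] at h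
      nlinarith [h.symm]
    have hc' := hc.tendsto.mono_left (nhdsWithin_le_nhds (s := Iio (1:ℝ)))
    simp only [mul_one] at hc'
    rw [div_self h1s.ne'] at hc'
    exact hc'
  have hmax1 : max ‖z₀‖ s < 1 := max_lt hz₀ ha
  refine ge_of_tendsto hlim ?_
  filter_upwards [Ioo_mem_nhdsLT_of_mem
    (show (1:ℝ) ∈ Ioc (max ‖z₀‖ s) 1 from ⟨hmax1, le_refl 1⟩)] with r hr
  exact main r hr

open Metric Set Filter Function in
private lemma stmt8_listProd_diff (L : List ℂ) :
    Differentiable ℂ (fun z => (L.map (fun w => z - w)).prod) := by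
  induction L with
  | nil => simpa using differentiable_const (1:ℂ)
  | cons a L ih =>
    simp only [List.map_cons, List.prod_cons]
    exact (differentiable_id.sub_const a).mul ih

open Metric Set Filter Function in
private lemma stmt8_pseudo_abs (ζ a : ℂ) :
    ‖(a - ζ) / (1 - (starRingEnd ℂ) a * ζ)‖ = pseudoDist ζ a := by
  rw [norm_div, pseudoDist]
  congr 1
  · exact norm_sub_rev a ζ
  · rw [← Complex.norm_conj]
    congr 1
    simp [map_sub, map_mul, mul_comm]

open Metric Set Filter Function in
private lemma stmt8_key_bound (δ : ℝ) (hδ0 : 0 ≤ δ) (L : List ℂ) :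
    ∀ g h : ℂ → ℂ,
      (∀ z ∈ Metric.ball (0:ℂ) 1, ‖g z‖ ≤ 1) →
      (∀ w ∈ L, ‖w‖ < 1) →
      (∀ z ∈ Metric.ball (0:ℂ) 1, g z = (L.map (fun w => z - w)).prod * h z) →
      DifferentiableOn ℂ h (Metric.ball 0 1) →
      ∀ ζ ∈ Metric.ball (0:ℂ) 1, (∀ w ∈ L, pseudoDist ζ w ≤ δ) →
      ‖g ζ‖ ≤ δ ^ L.length := by
  induction L with
  | nil =>
    intro g h hgb _ heq _ ζ hζ _
    simpa using hgb ζ hζ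
  | cons a L ih =>
    intro g h hgb hmem heq hh ζ hζ hpd
    have ha1 : ‖a‖ < 1 := hmem a (List.mem_cons_self)
    set g₁ : ℂ → ℂ :=
      fun z => -((1 - (starRingEnd ℂ) a * z) * ((L.map (fun w => z - w)).prod * h z)) with hg₁def
    have hg₁ : DifferentiableOn ℂ g₁ (ball 0 1) := by
      apply DifferentiableOn.neg
      apply DifferentiableOn.mul
      · exact ((differentiable_const (1:ℂ)).sub ((differentiable_id).const_mul _)).differentiableOn
      · exact ((stmt8_listProd_diff L).differentiableOn).mul hh
    have heq' : ∀ z ∈ ball (0:ℂ) 1, g z = ((a - z) / (1 - (starRingEnd ℂ) a * z)) * g₁ z := by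
      intro z hz
      rw [mem_ball_zero_iff] at hz
      have hne := stmt8_one_sub_ne ha1 hz
      have := heq z (mem_ball_zero_iff.mpr hz)
      simp only [List.map_cons, List.prod_cons] at this
      rw [this, hg₁def]
      beta_reduce
      rw [div_mul_eq_mul_div, eq_div_iff hne]
      ring
    have hb₁ : ∀ z ∈ ball (0:ℂ) 1, ‖g₁ z‖ ≤ 1 :=
      stmt8_quotient_bound ha1 hg₁ hgb heq'
    have hIH : ‖g₁ ζ‖ ≤ δ ^ L.length := by
      apply ih g₁ (fun z => -((1 - (starRingEnd ℂ) a * z) * h z)) hb₁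
        (fun w hw => hmem w (List.mem_cons_of_mem a hw))
        (fun z _ => by rw [hg₁def]; ring)
        (by
          apply DifferentiableOn.neg
          exact (((differentiable_const (1:ℂ)).sub
            ((differentiable_id).const_mul _)).differentiableOn).mul hh)
        ζ hζ (fun w hw => hpd w (List.mem_cons_of_mem a hw))
    have hgζ := heq' ζ hζ
    rw [hgζ, norm_mul, stmt8_pseudo_abs]
    calc pseudoDist ζ a * ‖g₁ ζ‖ ≤ δ * δ ^ L.length := by
          apply mul_le_mul (hpd a (List.mem_cons_self)) hIH (norm_nonneg _) hδ0
      _ = δ ^ (a :: L).length := by rw [List.length_cons, pow_succ]; ring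

open Metric Set Filter Function in
private lemma stmt8_glob_div {f : ℂ → ℂ} (hf : DifferentiableOn ℂ f (ball 0 1)) {w : ℂ}
    (hw : w ∈ ball (0:ℂ) 1) (m : ℕ) {g : ℂ → ℂ} (hg : AnalyticAt ℂ g w)
    (hfg : ∀ᶠ z in nhds w, f z = (z - w) ^ m * g z) :
    ∃ h : ℂ → ℂ, DifferentiableOn ℂ h (ball 0 1) ∧
      ∀ z ∈ ball (0:ℂ) 1, f z = (z - w) ^ m * h z := by
  classical
  set h : ℂ → ℂ := Function.update (fun z => f z / (z - w) ^ m) w (g w) with hdef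
  have hev : h =ᶠ[nhds w] g := by
    filter_upwards [hfg] with z hz
    by_cases hzw : z = w
    · subst hzw; simp [hdef]
    · rw [hdef, Function.update_of_ne hzw, hz,
        mul_div_cancel_left₀ _ (pow_ne_zero m (sub_ne_zero.mpr hzw))]
  refine ⟨h, ?_, ?_⟩
  · intro z hz
    by_cases hzw : z = w
    · subst hzw
      exact (hg.differentiableAt.congr_of_eventuallyEq hev).differentiableWithinAt
    · have hopen : IsOpen (ball (0:ℂ) 1 \ {w}) := isOpen_ball.sdiff isClosed_singleton
      have hzmem : z ∈ ball (0:ℂ) 1 \ {w} := ⟨hz, hzw⟩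
      have : DifferentiableAt ℂ h z := by
        have hd : DifferentiableAt ℂ (fun z => f z / (z - w) ^ m) z := by
          apply DifferentiableAt.div
          · exact (hf.differentiableAt (isOpen_ball.mem_nhds hz))
          · exact ((differentiable_id.sub_const w).pow m).differentiableAt
          · exact pow_ne_zero m (sub_ne_zero.mpr hzw)
        apply hd.congr_of_eventuallyEq
        filter_upwards [hopen.mem_nhds hzmem] with y hy
        rw [hdef, Function.update_of_ne hy.2]
      exact this.differentiableWithinAt
  · intro z hz
    by_cases hzw : z = w
    · subst hzw
      rcases Nat.eq_zero_or_pos m with hm | hm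
      · subst hm
        simp [hdef, hfg.self_of_nhds]
      · have h0 := hfg.self_of_nhds
        rw [sub_self, zero_pow hm.ne', zero_mul] at h0 ⊢
        exact h0
    · rw [hdef, Function.update_of_ne hzw,
        mul_div_cancel₀ _ (pow_ne_zero m (sub_ne_zero.mpr hzw))]

open Metric Set Filter Function in
private lemma stmt8_finset_div {f : ℂ → ℂ} (hf : DifferentiableOn ℂ f (ball 0 1)) (m : ℂ → ℕ)
    (S : Finset ℂ) (hS : ∀ w ∈ S, w ∈ ball (0:ℂ) 1)
    (hloc : ∀ w ∈ S, ∃ g : ℂ → ℂ, AnalyticAt ℂ g w ∧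
      ∀ᶠ z in nhds w, f z = (z - w) ^ (m w) * g z) :
    ∃ h : ℂ → ℂ, DifferentiableOn ℂ h (ball 0 1) ∧
      ∀ z ∈ ball (0:ℂ) 1, f z = (∏ w ∈ S, (z - w) ^ (m w)) * h z := by
  classical
  induction S using Finset.induction with
  | empty => exact ⟨f, hf, fun z _ => by simp⟩
  | insert _ _ hnotmem =>
    rename_i a S ih
    obtain ⟨h₁, hh₁, heq₁⟩ := ih (fun w hw => hS w (Finset.mem_insert_of_mem hw))
      (fun w hw => hloc w (Finset.mem_insert_of_mem hw))
    have haball : a ∈ ball (0:ℂ) 1 := hS a (Finset.mem_insert_self a S)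
    obtain ⟨g, hg, hfg⟩ := hloc a (Finset.mem_insert_self a S)
    have hPne : (∏ w ∈ S, (a - w) ^ (m w)) ≠ 0 := by
      apply Finset.prod_ne_zero_iff.mpr
      intro w hw
      apply pow_ne_zero
      rw [sub_ne_zero]
      intro hwa
      exact hnotmem (hwa ▸ hw)
    have hPcont : ContinuousAt (fun z => ∏ w ∈ S, (z - w) ^ (m w)) a := by fun_prop
    have hPev : ∀ᶠ z in nhds a, (∏ w ∈ S, (z - w) ^ (m w)) ≠ 0 :=
      hPcont.eventually_ne hPne
    have hball : ∀ᶠ z in nhds a, z ∈ ball (0:ℂ) 1 := isOpen_ball.eventually_mem haball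
    have hloc₁ : ∀ᶠ z in nhds a, h₁ z = (z - a) ^ (m a) *
        (g z / ∏ w ∈ S, (z - w) ^ (m w)) := by
      filter_upwards [hPev, hball, hfg] with z hP hb hfz
      have := heq₁ z hb
      field_simp
      rw [this] at hfz
      linear_combination hfz
    have hg₁ : AnalyticAt ℂ (fun z => g z / ∏ w ∈ S, (z - w) ^ (m w)) a := by
      apply hg.div
      · apply Finset.analyticAt_fun_prod
        intro w hw
        exact ((analyticAt_id.sub analyticAt_const).pow _)
      · exact hPne
    obtain ⟨h, hh, heq⟩ := stmt8_glob_div hh₁ haball (m a) hg₁ hloc₁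
    refine ⟨h, hh, fun z hz => ?_⟩
    rw [Finset.prod_insert hnotmem, heq₁ z hz, heq z hz]
    ring

open Metric Set Filter Function in
private lemma stmt8_iteratedDeriv_eq_coeff {f : ℂ → ℂ} {w : ℂ}
    {p : FormalMultilinearSeries ℂ ℂ ℂ} (hp : HasFPowerSeriesAt f p w) (n : ℕ) :
    iteratedDeriv n f w = (n.factorial : ℂ) * p.coeff n := by
  obtain ⟨r, hball⟩ := hp
  have := hball.factorial_smul (1:ℂ) n
  rw [iteratedDeriv_eq_iteratedFDeriv, ← this]
  rw [FormalMultilinearSeries.coeff, nsmul_eq_mul]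
  norm_num

open Metric Set Filter Function in
private lemma stmt8_zeroOrder_eq_order {f : ℂ → ℂ} {w : ℂ}
    {p : FormalMultilinearSeries ℂ ℂ ℂ} (hp : HasFPowerSeriesAt f p w) :
    zeroOrder f w = p.order := by
  have hsets : {n : ℕ | iteratedDeriv n f w ≠ 0} = {n : ℕ | p n ≠ 0} := by
    ext n
    simp only [Set.mem_setOf_eq, stmt8_iteratedDeriv_eq_coeff hp n, mul_ne_zero_iff, ne_eq,
      Nat.cast_eq_zero, Nat.factorial_ne_zero, not_false_eq_true, true_and,
      FormalMultilinearSeries.coeff_eq_zero]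
  rw [zeroOrder, hsets]
  rfl

open Metric Set Filter Function in
private lemma stmt8_local_factor {f : ℂ → ℂ} {w : ℂ}
    {p : FormalMultilinearSeries ℂ ℂ ℂ} (hp : HasFPowerSeriesAt f p w) :
    ∃ g : ℂ → ℂ, AnalyticAt ℂ g w ∧
      ∀ᶠ z in nhds w, f z = (z - w) ^ (zeroOrder f w) * g z := by
  refine ⟨(Function.swap dslope w)^[p.order] f,
    ⟨_, hp.has_fpower_series_iterate_dslope_fslope p.order⟩, ?_⟩
  rw [stmt8_zeroOrder_eq_order hp]
  filter_upwards [Filter.Eventually.of_forall hp.eq_pow_order_mul_iterate_dslope] with z hz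
  rw [hz, smul_eq_mul]

open Metric Set Filter Function in
private lemma stmt8_zeroOrder_pos {f : ℂ → ℂ} {w : ℂ}
    {p : FormalMultilinearSeries ℂ ℂ ℂ} (hp : HasFPowerSeriesAt f p w) (hp0 : p ≠ 0)
    (hfw : f w = 0) : 1 ≤ zeroOrder f w := by
  rw [stmt8_zeroOrder_eq_order hp]
  rcases Nat.eq_zero_or_pos p.order with h | h
  · exfalso
    have := FormalMultilinearSeries.apply_order_ne_zero hp0
    rw [h] at this
    have hc : p.coeff 0 = f w := hp.coeff_zero 1
    rw [hfw] at hc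
    exact this (FormalMultilinearSeries.coeff_eq_zero.mp hc)
  · exact h

open Metric Set Filter Function in
private lemma stmt8_repList_prod (m : ℂ → ℕ) (z : ℂ) : ∀ l : List ℂ,
    ((l.flatMap fun w => List.replicate (m w) w).map (fun w => z - w)).prod
      = (l.map (fun w => (z - w) ^ (m w))).prod := by
  intro l
  induction l with
  | nil => rfl
  | cons a l ih =>
    simp only [List.flatMap_cons, List.map_append, List.prod_append, List.map_replicate,
      List.prod_replicate, List.map_cons, List.prod_cons, ih]

open Metric Set Filter Function in
private lemma stmt8_repList_length (m : ℂ → ℕ) : ∀ l : List ℂ,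
    (l.flatMap fun w => List.replicate (m w) w).length = (l.map m).sum := by
  intro l
  induction l with
  | nil => rfl
  | cons a l ih =>
    simp only [List.flatMap_cons, List.length_append, List.length_replicate, List.map_cons,
      List.sum_cons, ih]

open Metric Set Filter Function in
private lemma stmt8_repList_mem (m : ℂ → ℕ) {w : ℂ} {l : List ℂ}
    (hw : w ∈ l.flatMap fun w => List.replicate (m w) w) : w ∈ l := by
  rw [List.mem_flatMap] at hw
  obtain ⟨a, ha, hw⟩ := hw
  rw [List.eq_of_mem_replicate hw]
  exact ha


open Metric Set Filter Function

/-- For an inner function with η-weak Property 𝔥, each component of Ω_{B,η} contains at least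
one zero, and the number of zeros counted with multiplicity is at most ln η / ln δ_{B,η}. -/
theorem stmt8 (B : ℂ → ℂ) (hB : IsInner B)
    (η : ℝ) (hWH : WeakPropertyHAt B η) :
    ∀ z ∈ levelSet B η,
      (∃ w ∈ connectedComponentIn (levelSet B η) z, B w = 0) ∧
      ∃ S : Finset ℂ,
        (↑S = {w ∈ connectedComponentIn (levelSet B η) z | B w = 0}) ∧
        ((∑ w ∈ S, zeroOrder B w : ℕ) : ℝ) ≤ Real.log η / Real.log (deltaLevel B η) := by
  classical
  obtain ⟨⟨⟨hη0, hη1⟩, hcl⟩, hδ1⟩ := hWH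
  obtain ⟨hdiff, hbound, hae⟩ := hB
  intro z hz
  set F := levelSet B η with hFdef
  set C := connectedComponentIn F z with hCdef
  -- openness of the level set
  have hFball : F ⊆ ball (0:ℂ) 1 := fun x hx => mem_ball_zero_iff.mpr hx.1
  have hFopen : IsOpen F := by
    have hFeq : F = ball (0:ℂ) 1 ∩ B ⁻¹' {w : ℂ | ‖w‖ < η} := by
      ext x
      simp only [hFdef, levelSet, mem_setOf_eq, mem_inter_iff, mem_preimage, mem_ball_zero_iff]
    rw [hFeq]
    exact ContinuousOn.isOpen_inter_preimage hdiff.continuousOn isOpen_ball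
      (isOpen_lt continuous_norm continuous_const)
  have hCopen : IsOpen C := hFopen.connectedComponentIn
  have hzC : z ∈ C := mem_connectedComponentIn hz
  have hCF : C ⊆ F := connectedComponentIn_subset F z
  have hKball : closure C ⊆ ball (0:ℂ) 1 := hcl z hz
  have hCball : C ⊆ ball (0:ℂ) 1 := subset_closure.trans hKball
  -- B is not identically zero on the disk
  have hBnotzero : ¬ (EqOn B 0 (ball (0:ℂ) 1)) := by
    intro hzero
    have : (MeasureTheory.ae (MeasureTheory.volume : MeasureTheory.Measure ℝ)).NeBot :=
      MeasureTheory.ae_neBot.mpr (by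
        intro h0
        have := congrArg (fun μ : MeasureTheory.Measure ℝ => μ (Set.Icc 0 1)) h0
        simp [Real.volume_Icc] at this)
    obtain ⟨θ, hθ⟩ := hae.exists
    have hev : ∀ᶠ r : ℝ in nhdsWithin 1 (Iio 1),
        ‖B ((r : ℂ) * Complex.exp ((θ : ℂ) * Complex.I))‖ = 0 := by
      filter_upwards [Ioo_mem_nhdsLT_of_mem
        (show (1:ℝ) ∈ Ioc (0:ℝ) 1 from ⟨one_pos, le_refl 1⟩)] with r hr
      have hmem : ((r : ℂ) * Complex.exp ((θ : ℂ) * Complex.I)) ∈ ball (0:ℂ) 1 := by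
        rw [mem_ball_zero_iff]
        rw [show ‖(r : ℂ) * Complex.exp ((θ : ℂ) * Complex.I)‖
          = ‖(r : ℂ) * Complex.exp ((θ : ℂ) * Complex.I)‖ from rfl]
        rw [norm_mul, Complex.norm_real, Real.norm_eq_abs, Complex.norm_exp_ofReal_mul_I, mul_one]
        rw [abs_of_pos hr.1]
        exact hr.2
      rw [hzero hmem]
      simp
    have h0 : Tendsto (fun r : ℝ =>
        ‖B ((r : ℂ) * Complex.exp ((θ : ℂ) * Complex.I))‖)
        (nhdsWithin 1 (Iio 1)) (nhds 0) := by
      rw [tendsto_congr' hev]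
      exact tendsto_const_nhds
    have : (0 : ℝ) = 1 := tendsto_nhds_unique h0 hθ
    norm_num at this
  have hAn : AnalyticOnNhd ℂ B (ball (0:ℂ) 1) := hdiff.analyticOnNhd isOpen_ball
  have hpre : IsPreconnected (ball (0:ℂ) 1) := (convex_ball (0:ℂ) 1).isPreconnected
  have hNotLoc : ∀ w ∈ ball (0:ℂ) 1, ¬ (∀ᶠ x in nhds w, B x = 0) := by
    intro w hw hev
    exact hBnotzero (hAn.eqOn_zero_of_preconnected_of_frequently_eq_zero hpre hw
      ((hev.filter_mono nhdsWithin_le_nhds).frequently))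
  -- facts about δ
  set δ := deltaLevel B η with hδdef
  have hδset : ∀ x y : ℂ, x ∈ F → y ∈ connectedComponentIn F x → pseudoDist x y ≤ δ := by
    intro x y hx hy
    apply le_csSup
    · refine ⟨1, ?_⟩
      rintro d ⟨z₁, z₂, hz₁, hz₂, rfl⟩
      have h1 : ‖z₁‖ < 1 := hz₁.1
      have h2 : ‖z₂‖ < 1 := (connectedComponentIn_subset _ _ hz₂).1
      exact div_le_one_of_le₀ (stmt8_abs_sub_le z₁ z₂ h1.le h2.le) (norm_nonneg _)
    · exact ⟨x, y, hx, hy, rfl⟩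
  have hδ0 : 0 ≤ δ := by
    have h00 : pseudoDist z z = 0 := by simp [pseudoDist]
    have := hδset z z hz (mem_connectedComponentIn hz)
    rw [h00] at this
    exact this
  -- the frontier of C is nonempty
  have hfr_ne : (frontier C).Nonempty := by
    by_contra h
    rw [Set.not_nonempty_iff_eq_empty] at h
    have hfr : frontier C = closure C \ C := by
      rw [frontier, hCopen.interior_eq]
    have hclosed : IsClosed C := by
      apply isClosed_of_closure_subset
      rw [hfr] at h
      exact diff_eq_empty.mp h
    rcases (isClopen_iff.mp ⟨hclosed, hCopen⟩) with h0 | h0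
    · rw [h0] at hzC; exact hzC
    · have : (2:ℂ) ∈ C := by rw [h0]; trivial
      have := hCball this
      rw [mem_ball_zero_iff] at this
      rw [show ‖(2:ℂ)‖ = 2 by simp] at this
      norm_num at this
  -- modulus equals η on the frontier
  have hfrontier : ∀ ζ ∈ frontier C, ζ ∈ ball (0:ℂ) 1 ∧ ‖B ζ‖ = η := by
    intro ζ hζ
    have hζcl : ζ ∈ closure C := frontier_subset_closure hζ
    have hζball : ζ ∈ ball (0:ℂ) 1 := hKball hζcl
    have hζnotC : ζ ∉ C := by
      intro hmem
      rw [hCopen.frontier_eq] at hζ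
      exact hζ.2 hmem
    refine ⟨hζball, ?_⟩
    have hcont : ContinuousWithinAt (fun x => ‖B x‖) C ζ := by
      apply ContinuousAt.continuousWithinAt
      exact continuous_norm.continuousAt.comp
        ((hdiff.differentiableAt (isOpen_ball.mem_nhds hζball)).continuousAt)
    have hneb : (nhdsWithin ζ C).NeBot := mem_closure_iff_nhdsWithin_neBot.mp hζcl
    have hle : ‖B ζ‖ ≤ η := by
      apply le_of_tendsto hcont
      apply eventually_nhdsWithin_of_forall
      intro x hx
      exact (hCF hx).2.le
    have hge : ¬ (‖B ζ‖ < η) := by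
      intro hlt
      have hζF : ζ ∈ F := ⟨mem_ball_zero_iff.mp hζball, hlt⟩
      have hop : IsOpen (connectedComponentIn F ζ) := hFopen.connectedComponentIn
      have hζin : ζ ∈ connectedComponentIn F ζ := mem_connectedComponentIn hζF
      obtain ⟨y, hy1, hy2⟩ := mem_closure_iff.mp hζcl _ hop hζin
      have h1 : connectedComponentIn F ζ = connectedComponentIn F y := connectedComponentIn_eq hy1
      have h2 : C = connectedComponentIn F y := connectedComponentIn_eq hy2
      apply hζnotC
      show ζ ∈ C
      rw [h2, ← h1]
      exact hζin
    exact le_antisymm hle (not_lt.mp hge)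
  have hbd : Bornology.IsBounded C := (Metric.isBounded_ball (x := (0:ℂ)) (r := 1)).subset hCball
  -- there is a zero in C
  have hzeroC : ∃ w ∈ C, B w = 0 := by
    by_contra hno
    push_neg at hno
    have hKne : ∀ x ∈ closure C, B x ≠ 0 := by
      intro x hx
      by_cases h : x ∈ C
      · exact hno x h
      · have hxf : x ∈ frontier C := ⟨hx, by rwa [hCopen.interior_eq]⟩
        have habs := (hfrontier x hxf).2
        intro h0
        rw [h0] at habs
        simp at habs
        exact absurd habs.symm (ne_of_gt hη0)
    have hdc : DiffContOnCl ℂ (fun x => (B x)⁻¹) C :=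
      ⟨(hdiff.mono hCball).inv (fun x hx => hno x hx),
       (hdiff.continuousOn.mono hKball).inv₀ hKne⟩
    have hfb : ∀ ζ ∈ frontier C, ‖(B ζ)⁻¹‖ ≤ η⁻¹ := by
      intro ζ hζ
      rw [norm_inv]
      rw [show ‖B ζ‖ = ‖B ζ‖ from rfl, (hfrontier ζ hζ).2]
    have hmax := Complex.norm_le_of_forall_mem_frontier_norm_le hbd hdc hfb
      (subset_closure hzC)
    rw [norm_inv] at hmax
    have hBzpos : 0 < ‖B z‖ := norm_pos_iff.mpr (hno z hzC)
    have : η ≤ ‖B z‖ := by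
      rwa [show ‖B z‖ = ‖B z‖ from rfl,
        inv_le_inv₀ hBzpos hη0] at hmax
    exact absurd hz.2 (not_lt.mpr this)
  -- the zero set is finite
  have hZfin : {w | w ∈ C ∧ B w = 0}.Finite := by
    by_contra hinf
    have hK : IsCompact (closure C) := Metric.isCompact_of_isClosed_isBounded
      isClosed_closure hbd.closure
    obtain ⟨x, hxK, hacc⟩ := Set.Infinite.exists_accPt_of_subset_isCompact hinf hK
      (fun w hw => subset_closure hw.1)
    have hxball : x ∈ ball (0:ℂ) 1 := hKball hxK
    have hfreq : ∃ᶠ y in nhdsWithin x {x}ᶜ, B y = 0 := by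
      rw [accPt_iff_frequently] at hacc
      rw [frequently_nhdsWithin_iff]
      apply hacc.mono
      rintro y ⟨hyx, hyC, hy0⟩
      exact ⟨hy0, hyx⟩
    exact hBnotzero (hAn.eqOn_zero_of_preconnected_of_frequently_eq_zero hpre hxball hfreq)
  set S := hZfin.toFinset with hSdef
  have hScoe : (↑S : Set ℂ) = {w | w ∈ C ∧ B w = 0} := hZfin.coe_toFinset
  have hSmem : ∀ w, w ∈ S ↔ (w ∈ C ∧ B w = 0) := by
    intro w
    rw [← Set.mem_setOf_eq (p := fun w => w ∈ C ∧ B w = 0), ← hScoe]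
    simp
  -- local data at every zero
  have hSball : ∀ w ∈ S, w ∈ ball (0:ℂ) 1 := fun w hw => hCball ((hSmem w).mp hw).1
  have hloc : ∀ w ∈ S, ∃ g : ℂ → ℂ, AnalyticAt ℂ g w ∧
      ∀ᶠ x in nhds w, B x = (x - w) ^ (zeroOrder B w) * g x := by
    intro w hw
    obtain ⟨p, hp⟩ := hAn w (hSball w hw)
    exact stmt8_local_factor hp
  have hord1 : ∀ w ∈ S, 1 ≤ zeroOrder B w := by
    intro w hw
    obtain ⟨p, hp⟩ := hAn w (hSball w hw)
    have hp0 : p ≠ 0 := by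
      intro h0
      exact hNotLoc w (hSball w hw) (hp.locally_zero_iff.mpr h0)
    exact stmt8_zeroOrder_pos hp hp0 ((hSmem w).mp hw).2
  -- divide out the zeros
  obtain ⟨h, hh, hfac⟩ := stmt8_finset_div hdiff (fun w => zeroOrder B w) S hSball hloc
  -- pick a frontier point
  obtain ⟨ζ, hζfr⟩ := hfr_ne
  obtain ⟨hζball, hζB⟩ := hfrontier ζ hζfr
  -- pseudo-hyperbolic distance from ζ to the zeros
  have hpd : ∀ w ∈ S, pseudoDist ζ w ≤ δ := by
    intro w hwS
    have hwC : w ∈ C := ((hSmem w).mp hwS).1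
    have hwball : ‖w‖ < 1 := by
      have := hCball hwC
      rwa [mem_ball_zero_iff] at this
    have hζa : ‖ζ‖ < 1 := by
      rwa [mem_ball_zero_iff] at hζball
    have hneb : (nhdsWithin ζ C).NeBot :=
      mem_closure_iff_nhdsWithin_neBot.mp (frontier_subset_closure hζfr)
    have hcont : ContinuousWithinAt (fun x => pseudoDist x w) C ζ := by
      apply ContinuousAt.continuousWithinAt
      apply ContinuousAt.div
      · exact continuous_norm.continuousAt.comp
          ((continuous_id.sub continuous_const).continuousAt)
      · exact continuous_norm.continuousAt.comp
          ((continuous_const.sub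
            ((Complex.continuous_conj.mul continuous_const)))).continuousAt
      · intro h0
        have h0' : (1 : ℂ) - (starRingEnd ℂ) ζ * w = 0 := norm_eq_zero.mp h0
        exact stmt8_one_sub_ne hζa hwball h0'
    apply le_of_tendsto hcont
    apply eventually_nhdsWithin_of_forall
    intro x hx
    have hxF : x ∈ F := hCF hx
    have hwcx : w ∈ connectedComponentIn F x := by
      have h2 : C = connectedComponentIn F x := connectedComponentIn_eq hx
      rw [← h2]
      exact hwC
    exact hδset x w hxF hwcx
  -- apply the key multiplicity bound
  set L := S.toList.flatMap (fun w => List.replicate (zeroOrder B w) w) with hLdef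
  have hLmem : ∀ w ∈ L, w ∈ S := by
    intro w hw
    have := stmt8_repList_mem (fun w => zeroOrder B w) hw
    rwa [Finset.mem_toList] at this
  have hkey := stmt8_key_bound δ hδ0 L B h
    (fun x hx => hbound x hx)
    (fun w hw => by
      have := hSball w (hLmem w hw)
      rwa [mem_ball_zero_iff] at this)
    (fun x hx => by
      rw [hfac x hx, hLdef, stmt8_repList_prod,
        Finset.prod_map_toList S fun w => (x - w) ^ (zeroOrder B w)])
    hh ζ hζball (fun w hw => hpd w (hLmem w hw))
  have hLlen : L.length = ∑ w ∈ S, zeroOrder B w := by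
    rw [hLdef, stmt8_repList_length]
    exact Finset.sum_map_toList S fun w => zeroOrder B w
  rw [hζB, hLlen] at hkey
  -- conclusion
  obtain ⟨w₀, hw₀C, hw₀0⟩ := hzeroC
  have hw₀S : w₀ ∈ S := (hSmem w₀).mpr ⟨hw₀C, hw₀0⟩
  have hN1 : 1 ≤ ∑ w ∈ S, zeroOrder B w :=
    le_trans (hord1 w₀ hw₀S) (Finset.single_le_sum (fun w _ => Nat.zero_le _) hw₀S)
  have hδpos : 0 < δ := by
    rcases lt_or_eq_of_le hδ0 with h | h
    · exact h
    · exfalso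
      rw [← h] at hkey
      rw [zero_pow (by omega : ∑ w ∈ S, zeroOrder B w ≠ 0)] at hkey
      linarith
  refine ⟨⟨w₀, hw₀C, hw₀0⟩, S, ?_, ?_⟩
  · rw [hScoe]
  · have hlogδ : Real.log δ < 0 := Real.log_neg hδpos hδ1
    have hlog : Real.log η ≤ (∑ w ∈ S, zeroOrder B w : ℕ) * Real.log δ := by
      calc Real.log η ≤ Real.log (δ ^ (∑ w ∈ S, zeroOrder B w)) := Real.log_le_log hη0 hkey
        _ = (∑ w ∈ S, zeroOrder B w : ℕ) * Real.log δ := Real.log_pow _ _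
    rw [le_div_iff_of_neg hlogδ]
    exact hlog

end
end

section
/- The set of inner functions with weak Property 𝔥 is open in the space of all inner functions with the supremum norm: for every inner function u with weak Property 𝔥 there exists ε > 0 such that every inner function v with ‖v − u‖_∞ < ε (where ‖f‖_∞ = sup_{z∈𝔻} |f(z)|) also has weak Property 𝔥. -/
noncomputable section

lemma pseudoDist_le_one {z w : ℂ} (hz : ‖z‖ < 1) (hw : ‖w‖ < 1) :
    pseudoDist z w ≤ 1 := by
  have hden : (0:ℝ) < ‖1 - (starRingEnd ℂ) z * w‖ := by
    have h1 : ‖(starRingEnd ℂ) z * w‖ < 1 := by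
      rw [norm_mul, Complex.norm_conj]
      nlinarith [norm_nonneg z, norm_nonneg w]
    have : (1 : ℂ) - (starRingEnd ℂ) z * w ≠ 0 := by
      intro h
      have : (1:ℂ) = (starRingEnd ℂ) z * w := by linear_combination h
      rw [← this] at h1; simp at h1
    exact (norm_pos_iff.mpr this)
  rw [pseudoDist, div_le_one hden]
  have hsq : ‖z - w‖ ^ 2 ≤ ‖1 - (starRingEnd ℂ) z * w‖ ^ 2 := by
    rw [Complex.sq_norm, Complex.sq_norm]
    have hz2 : Complex.normSq z < 1 := by
      rw [← Complex.sq_norm]; nlinarith [norm_nonneg z]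
    have hw2 : Complex.normSq w < 1 := by
      rw [← Complex.sq_norm]; nlinarith [norm_nonneg w]
    simp only [Complex.normSq_apply, Complex.sub_re, Complex.sub_im, Complex.mul_re,
      Complex.mul_im, Complex.one_re, Complex.one_im, Complex.conj_re, Complex.conj_im] at *
    nlinarith [sq_nonneg (1 - z.re^2 - z.im^2), sq_nonneg (1 - w.re^2 - w.im^2),
      mul_nonneg (le_of_lt (by nlinarith : (0:ℝ) < 1 - (z.re^2 + z.im^2)))
        (le_of_lt (by nlinarith : (0:ℝ) < 1 - (w.re^2 + w.im^2)))]
  nlinarith [norm_nonneg (z - w), hden, hsq]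

/-- The set of inner functions with weak Property 𝔥 is open for the sup norm. -/
theorem stmt10 (u : ℂ → ℂ) (hu : IsInner u) (hWH : ∃ η, WeakPropertyHAt u η) :
    ∃ ε > 0, ∀ v : ℂ → ℂ, IsInner v →
      supNormD (fun z => v z - u z) < ε → ∃ η, WeakPropertyHAt v η := by
  obtain ⟨η, ⟨⟨hη01, hB⟩, hδ⟩⟩ := hWH
  obtain ⟨hη0, hη1⟩ := hη01
  refine ⟨η / 2, by linarith, fun v hv hsup => ?_⟩
  -- pointwise bound on the difference
  have hpt : ∀ z : ℂ, ‖z‖ < 1 → ‖v z - u z‖ < η / 2 := by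
    intro z hz
    have hzmem : z ∈ Metric.ball (0:ℂ) 1 := by
      simpa [Metric.mem_ball, Complex.dist_eq] using hz
    have hbdd : BddAbove (Set.range fun w : (Metric.ball (0:ℂ) 1) =>
        ‖v (w : ℂ) - u (w : ℂ)‖) := by
      refine ⟨2, ?_⟩
      rintro x ⟨w, rfl⟩
      calc ‖v (w : ℂ) - u (w : ℂ)‖
          ≤ ‖v (w : ℂ)‖ + ‖u (w : ℂ)‖ := by
            simpa using norm_sub_le (v (w : ℂ)) (u (w : ℂ))
        _ ≤ 1 + 1 := add_le_add (hv.2.1 _ w.2) (hu.2.1 _ w.2)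
        _ = 2 := by norm_num
    have hle : ‖v z - u z‖ ≤ supNormD (fun z => v z - u z) :=
      le_ciSup hbdd (⟨z, hzmem⟩ : (Metric.ball (0:ℂ) 1))
    exact lt_of_le_of_lt hle hsup
  -- the smaller level set is contained in the original one
  have hsub : levelSet v (η / 2) ⊆ levelSet u η := by
    rintro z ⟨hz1, hz2⟩
    refine ⟨hz1, ?_⟩
    have := hpt z hz1
    calc ‖u z‖ = ‖v z - (v z - u z)‖ := by ring_nf
      _ ≤ ‖v z‖ + ‖v z - u z‖ := by
            simpa using norm_sub_le (v z) (v z - u z)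
      _ < η / 2 + η / 2 := add_lt_add hz2 this
      _ = η := by ring
  refine ⟨η / 2, ⟨⟨⟨by linarith, by linarith⟩, fun z hz => ?_⟩, ?_⟩⟩
  · -- closure of components stays in the disk
    have hzmem : z ∈ levelSet u η := hsub hz
    refine Set.Subset.trans (closure_mono ?_) (hB z hzmem)
    exact connectedComponentIn_mono z hsub
  · -- deltaLevel bound
    set Sv := {d : ℝ | ∃ z₁ z₂ : ℂ, z₁ ∈ levelSet v (η / 2) ∧
      z₂ ∈ connectedComponentIn (levelSet v (η / 2)) z₁ ∧ d = pseudoDist z₁ z₂} with hSv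
    set Su := {d : ℝ | ∃ z₁ z₂ : ℂ, z₁ ∈ levelSet u η ∧
      z₂ ∈ connectedComponentIn (levelSet u η) z₁ ∧ d = pseudoDist z₁ z₂} with hSu
    have hSvSu : Sv ⊆ Su := by
      rintro d ⟨z₁, z₂, hz₁, hz₂, rfl⟩
      exact ⟨z₁, z₂, hsub hz₁, connectedComponentIn_mono z₁ hsub hz₂, rfl⟩
    have hSuBdd : BddAbove Su := by
      refine ⟨1, ?_⟩
      rintro d ⟨z₁, z₂, hz₁, hz₂, rfl⟩
      have hz₂' : z₂ ∈ levelSet u η :=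
        connectedComponentIn_subset (levelSet u η) z₁ hz₂
      exact pseudoDist_le_one hz₁.1 hz₂'.1
    rcases Set.eq_empty_or_nonempty Sv with hE | hNE
    · unfold deltaLevel
      rw [← hSv, hE, Real.sSup_empty]
      norm_num
    · have : deltaLevel v (η / 2) ≤ deltaLevel u η :=
        csSup_le_csSup hSuBdd hNE hSvSu
      exact lt_of_le_of_lt this hδ

end
end

section
/- The set of inner functions with weak Property 𝔅 is open in the space of all inner functions with the supremum norm: for every inner function u with weak Property 𝔅 there exists ε > 0 such that every inner function v with ‖v − u‖_∞ < ε (where ‖f‖_∞ = sup_{z∈𝔻} |f(z)|) also has weak Property 𝔅. -/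
noncomputable section

/-- The set of inner functions with weak Property 𝔅 is open for the sup norm. -/
theorem stmt11 (u : ℂ → ℂ) (hu : IsInner u) (hWB : ∃ θ, WeakPropertyBAt u θ) :
    ∃ ε > 0, ∀ v : ℂ → ℂ, IsInner v →
      supNormD (fun z => v z - u z) < ε → ∃ θ, WeakPropertyBAt v θ := by
  obtain ⟨θ, hθIoo, hB⟩ := hWB
  obtain ⟨hθ0, hθ1⟩ := hθIoo
  refine ⟨θ/2, by linarith, fun v hv hsup => ?_⟩
  -- pointwise bound
  have hpt : ∀ z ∈ Metric.ball (0:ℂ) 1, ‖v z - u z‖ < θ/2 := by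
    intro z hz
    have hbdd : BddAbove (Set.range fun z : (Metric.ball (0:ℂ) 1) =>
        ‖v (z:ℂ) - u (z:ℂ)‖) := by
      refine ⟨2, fun x hx => ?_⟩
      obtain ⟨w, rfl⟩ := hx
      calc ‖v (w:ℂ) - u (w:ℂ)‖ ≤ ‖v (w:ℂ)‖ + ‖u (w:ℂ)‖ :=
            norm_sub_le _ _
        _ ≤ 1 + 1 := add_le_add (hv.2.1 _ w.2) (hu.2.1 _ w.2)
        _ = 2 := by norm_num
    have := le_ciSup hbdd (⟨z, hz⟩ : (Metric.ball (0:ℂ) 1))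
    exact lt_of_le_of_lt this hsup
  have hsub : levelSet v (θ/2) ⊆ levelSet u θ := by
    rintro z ⟨hz1, hz2⟩
    refine ⟨hz1, ?_⟩
    have hzball : z ∈ Metric.ball (0:ℂ) 1 := by
      simpa [Metric.mem_ball, Complex.dist_eq] using hz1
    have h1 := hpt z hzball
    calc ‖u z‖ = ‖v z - (v z - u z)‖ := by ring_nf
      _ ≤ ‖v z‖ + ‖v z - u z‖ := norm_sub_le _ _
      _ < θ/2 + θ/2 := add_lt_add hz2 h1
      _ = θ := by ring
  refine ⟨θ/2, ⟨by constructor <;> linarith, fun z hz => ?_⟩⟩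
  have h1 : connectedComponentIn (levelSet v (θ/2)) z ⊆
      connectedComponentIn (levelSet u θ) z := connectedComponentIn_mono z hsub
  exact (closure_mono h1).trans (hB z (hsub hz))

end
end

section
/- Let x ∈ (0,1) and y > 1. Then (1 − x)/(1 − x^{1/y}) < y, and moreover ((1 + x^{1/y})/(1 − x^{1/y}))·((1 − x)/(1 + x)) < y². -/
noncomputable section

/-- For x ∈ (0,1) and y > 1: (1-x)/(1-x^{1/y}) < y and
((1+x^{1/y})/(1-x^{1/y}))·((1-x)/(1+x)) < y². -/
theorem stmt13 (x y : ℝ) (hx : x ∈ Set.Ioo (0:ℝ) 1) (hy : 1 < y) :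
    (1 - x) / (1 - x ^ (1/y)) < y ∧
    ((1 + x ^ (1/y)) / (1 - x ^ (1/y))) * ((1 - x) / (1 + x)) < y ^ 2 := by
  obtain ⟨hx0, hx1⟩ := hx
  have hy0 : (0:ℝ) < y := lt_trans one_pos hy
  set t := x ^ (1/y) with ht
  have ht0 : 0 < t := Real.rpow_pos_of_pos hx0 _
  have ht1 : t < 1 := Real.rpow_lt_one hx0.le hx1 (by positivity)
  have htx : t ^ y = x := by
    rw [ht, ← Real.rpow_mul hx0.le, one_div, inv_mul_cancel₀ hy0.ne', Real.rpow_one]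
  have hxt : x < t := by
    calc x = t ^ y := htx.symm
    _ < t ^ (1:ℝ) := Real.rpow_lt_rpow_of_exponent_gt ht0 ht1 hy
    _ = t := Real.rpow_one t
  have key : 1 - x < y * (1 - t) := by
    have hb := one_add_mul_self_lt_rpow_one_add (s := t - 1) (by linarith) (by linarith) hy
    have : (1 + (t - 1)) ^ y = x := by rw [show 1 + (t - 1) = t by ring, htx]
    nlinarith [hb, this]
  have h1t : 0 < 1 - t := by linarith
  constructor
  · rw [div_lt_iff₀ h1t]
    linarith [key]
  · rw [div_mul_div_comm, div_lt_iff₀ (by nlinarith : (0:ℝ) < (1 - t) * (1 + x))]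
    have hN : (0:ℝ) < (1 + t) * (1 - x) := by nlinarith
    have hsq : (1 - x) * (1 - x) < (y * (1 - t)) * (y * (1 - t)) :=
      mul_self_lt_mul_self (by linarith) key
    have h1 := mul_lt_mul_of_pos_left hsq (by nlinarith : (0:ℝ) < (1 + t) * (1 + t))
    have h2 : (0:ℝ) ≤ y ^ 2 * ((1 - t) * (1 + t)) * ((t - x) * (t + x)) := by
      apply mul_nonneg (mul_nonneg (sq_nonneg y) (by nlinarith))
      apply mul_nonneg (by linarith) (by linarith)
    have hfinal : ((1 + t) * (1 - x)) * ((1 + t) * (1 - x)) <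
        (y ^ 2 * ((1 - t) * (1 + x))) * ((1 + t) * (1 - x)) := by nlinarith [h1, h2]
    exact lt_of_mul_lt_mul_right hfinal hN.le
end
end

section
/- Let δ₀ ∈ (0, 1/e), and set γ = 1 + 2/√(−ln δ₀) and δ = δ₀^{1 − 1/√(−ln δ₀)}. For all x, y, z in the open unit disk 𝔻, if ρ(x,y) ≤ δ₀ and ρ(x,z) ≥ δ, then ρ(y,z) ≥ ρ(x,z)^γ. -/
noncomputable section

lemma key_identity (a b : ℂ) :
    Complex.normSq (1 - (starRingEnd ℂ) a * b) - Complex.normSq (a - b)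
      = (1 - Complex.normSq a) * (1 - Complex.normSq b) := by
  simp [Complex.normSq_apply, Complex.mul_re, Complex.mul_im, Complex.sub_re, Complex.sub_im,
    Complex.one_re, Complex.one_im, Complex.conj_re, Complex.conj_im]
  ring

lemma denom_ne_s15 (a b : ℂ) (ha : ‖a‖ < 1) (hb : ‖b‖ < 1) :
    (1 : ℂ) - (starRingEnd ℂ) a * b ≠ 0 := by
  intro h
  have h1 : (1 : ℂ) = (starRingEnd ℂ) a * b := by linear_combination h
  have := congrArg (‖·‖) h1
  simp [map_mul] at this
  nlinarith [norm_nonneg a, norm_nonneg b]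

lemma denom_ge (a b : ℂ) :
    1 - ‖a‖ * ‖b‖ ≤ ‖1 - (starRingEnd ℂ) a * b‖ := by
  have := norm_sub_norm_le (1 : ℂ) ((starRingEnd ℂ) a * b)
  simpa [map_mul] using this

lemma pd_lt_one (a b : ℂ) (ha : ‖a‖ < 1) (hb : ‖b‖ < 1) :
    pseudoDist a b < 1 := by
  have hne := denom_ne_s15 a b ha hb
  have hpos : 0 < ‖1 - (starRingEnd ℂ) a * b‖ := by
    simpa [norm_pos_iff] using hne
  rw [pseudoDist, div_lt_one hpos]
  have hid := key_identity a b
  have h1 : Complex.normSq (a - b) < Complex.normSq (1 - (starRingEnd ℂ) a * b) := by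
    have h2 : 0 < (1 - Complex.normSq a) * (1 - Complex.normSq b) := by
      have e3 := Complex.sq_norm a
      have e4 := Complex.sq_norm b
      have p1 : Complex.normSq a < 1 := by nlinarith [norm_nonneg a]
      have p2 : Complex.normSq b < 1 := by nlinarith [norm_nonneg b]
      nlinarith
    linarith
  have := Complex.sq_norm (a - b)
  have := Complex.sq_norm (1 - (starRingEnd ℂ) a * b)
  nlinarith [norm_nonneg (a - b), norm_nonneg (1 - (starRingEnd ℂ) a * b)]

lemma pd_lower (a b : ℂ) (ha : ‖a‖ < 1) (hb : ‖b‖ < 1) :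
    (‖b‖ - ‖a‖) / (1 - ‖a‖ * ‖b‖) ≤ pseudoDist a b := by
  set A := ‖a‖ with hA
  set B := ‖b‖ with hB
  have hA0 : 0 ≤ A := norm_nonneg a
  have hB0 : 0 ≤ B := norm_nonneg b
  have hABpos : 0 < 1 - A * B := by nlinarith
  have hpos : 0 < ‖1 - (starRingEnd ℂ) a * b‖ := by
    simpa [norm_pos_iff] using denom_ne_s15 a b ha hb
  rw [pseudoDist, div_le_div_iff₀ hABpos hpos]
  set D := ‖1 - (starRingEnd ℂ) a * b‖ with hD
  set m := ‖a - b‖ with hm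
  have hm0 : 0 ≤ m := norm_nonneg (a - b)
  have hDge : 1 - A * B ≤ D := denom_ge a b
  have hD2 : D ^ 2 = m ^ 2 + (1 - A ^ 2) * (1 - B ^ 2) := by
    have hid := key_identity a b
    have e1 := Complex.sq_norm (a - b)
    have e2 := Complex.sq_norm (1 - (starRingEnd ℂ) a * b)
    have e3 := Complex.sq_norm a
    have e4 := Complex.sq_norm b
    nlinarith [hid]
  have hmBA : B - A ≤ m := by
    have := abs_norm_sub_norm_le b a
    have h2 : |‖b‖ - ‖a‖| ≤ ‖b - a‖ := by
      simpa using this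
    have h3 : ‖b - a‖ = m := by rw [hm, norm_sub_rev]
    calc B - A ≤ |B - A| := le_abs_self _
      _ ≤ m := by rw [← h3]; exact h2
  rcases le_or_gt B A with hBA | hBA
  · nlinarith
  · have hc : 0 ≤ (1 - A ^ 2) * (1 - B ^ 2) :=
      mul_nonneg (by nlinarith) (by nlinarith)
    have hsq : ((B - A) * D) ^ 2 ≤ (m * (1 - A * B)) ^ 2 := by
      have h5 : 0 ≤ (1 - A ^ 2) * (1 - B ^ 2) * ((m - (B - A)) * (m + (B - A))) :=
        mul_nonneg hc (mul_nonneg (by linarith) (by linarith))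
      nlinarith [h5, hD2]
    have hL0 : 0 ≤ (B - A) * D := mul_nonneg (by linarith) (le_of_lt hpos)
    have hR0 : 0 ≤ m * (1 - A * B) := mul_nonneg hm0 (le_of_lt hABpos)
    nlinarith [hsq, hL0, hR0]



lemma pd_triangle (x y z : ℂ) (hx : ‖x‖ < 1) (hy : ‖y‖ < 1)
    (hz : ‖z‖ < 1) :
    (pseudoDist x z - pseudoDist x y) / (1 - pseudoDist x y * pseudoDist x z)
      ≤ pseudoDist y z := by
  set a : ℂ := (y - x) / (1 - (starRingEnd ℂ) x * y) with hadef
  set b : ℂ := (z - x) / (1 - (starRingEnd ℂ) x * z) with hbdef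
  have hdy : (1 : ℂ) - (starRingEnd ℂ) x * y ≠ 0 := denom_ne_s15 x y hx hy
  have hdz : (1 : ℂ) - (starRingEnd ℂ) x * z ≠ 0 := denom_ne_s15 x z hx hz
  have hyz : (1 : ℂ) - (starRingEnd ℂ) y * z ≠ 0 := denom_ne_s15 y z hy hz
  have hxx : (1 : ℂ) - (starRingEnd ℂ) x * x ≠ 0 := denom_ne_s15 x x hx hx
  have hconj : (starRingEnd ℂ) (1 - (starRingEnd ℂ) x * y) = 1 - x * (starRingEnd ℂ) y := by
    simp [map_sub, map_mul]
  have hdy' : (1 : ℂ) - x * (starRingEnd ℂ) y ≠ 0 := by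
    intro h; rw [← hconj, map_eq_zero] at h; exact hdy h
  have ha_abs : ‖a‖ = pseudoDist x y := by
    rw [hadef, pseudoDist, norm_div, norm_sub_rev]
  have hb_abs : ‖b‖ = pseudoDist x z := by
    rw [hbdef, pseudoDist, norm_div, norm_sub_rev]
  have ha_lt : ‖a‖ < 1 := by rw [ha_abs]; exact pd_lt_one x y hx hy
  have hb_lt : ‖b‖ < 1 := by rw [hb_abs]; exact pd_lt_one x z hx hz
  have id1 : a - b = ((y - z) * (1 - (starRingEnd ℂ) x * x)) /
      ((1 - (starRingEnd ℂ) x * y) * (1 - (starRingEnd ℂ) x * z)) := by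
    rw [hadef, hbdef, div_sub_div _ _ hdy hdz]; congr 1; ring
  have hconja : (starRingEnd ℂ) a =
      ((starRingEnd ℂ) y - (starRingEnd ℂ) x) / (1 - x * (starRingEnd ℂ) y) := by
    rw [hadef, map_div₀, map_sub, hconj]
  have id2 : 1 - (starRingEnd ℂ) a * b =
      ((1 - (starRingEnd ℂ) x * x) * (1 - (starRingEnd ℂ) y * z)) /
      ((1 - x * (starRingEnd ℂ) y) * (1 - (starRingEnd ℂ) x * z)) := by
    rw [hconja, hbdef, div_mul_div_comm, one_sub_div (mul_ne_zero hdy' hdz)]; congr 1; ring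
  have habs_eq : ‖1 - x * (starRingEnd ℂ) y‖
      = ‖1 - (starRingEnd ℂ) x * y‖ := by
    rw [← hconj, Complex.norm_conj]
  have key : pseudoDist a b = pseudoDist y z := by
    rw [pseudoDist, pseudoDist, id1, id2, norm_div, norm_div, norm_mul, norm_mul, norm_mul, norm_mul, habs_eq]
    have p1 : ‖1 - (starRingEnd ℂ) x * y‖ ≠ 0 := norm_ne_zero_iff.mpr hdy
    have p2 : ‖1 - (starRingEnd ℂ) x * z‖ ≠ 0 := norm_ne_zero_iff.mpr hdz
    have p3 : ‖1 - (starRingEnd ℂ) x * x‖ ≠ 0 := norm_ne_zero_iff.mpr hxx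
    have p4 : ‖1 - (starRingEnd ℂ) y * z‖ ≠ 0 := norm_ne_zero_iff.mpr hyz
    rw [div_div_div_cancel_right₀ (mul_ne_zero p1 p2), mul_comm ‖1 - (starRingEnd ℂ) x * x‖, mul_div_mul_right _ _ p3]
  have := pd_lower a b ha_lt hb_lt
  rw [ha_abs, hb_abs, key] at this
  exact this



lemma real_part (δ₀ r : ℝ) (h0 : 0 < δ₀) (h1 : δ₀ < 1 / Real.exp 1)
    (hr1 : r < 1) (hrδ : δ₀ ^ (1 - 1 / Real.sqrt (-Real.log δ₀)) ≤ r) :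
    r ^ (1 + 2 / Real.sqrt (-Real.log δ₀)) ≤ (r - δ₀) / (1 - δ₀ * r) := by
  have hlog1e : Real.log (1 / Real.exp 1) = -1 := by
    rw [one_div, Real.log_inv, Real.log_exp]
  have hL : 1 < -Real.log δ₀ := by
    have := Real.log_lt_log h0 h1
    rw [hlog1e] at this; linarith
  obtain ⟨s, hsdef⟩ : ∃ s, s = Real.sqrt (-Real.log δ₀) := ⟨_, rfl⟩
  rw [← hsdef] at hrδ ⊢
  have hs1 : 1 < s := by
    rw [hsdef]
    have e1 : (1 : ℝ) = Real.sqrt 1 := by simp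
    rw [e1]
    exact Real.sqrt_lt_sqrt (by norm_num) hL
  have hs0 : 0 < s := by linarith
  have hs2 : s ^ 2 = -Real.log δ₀ := by rw [hsdef]; exact Real.sq_sqrt (by linarith)
  have hδexp : δ₀ ^ (1 - 1 / s) = δ₀ * Real.exp s := by
    rw [Real.rpow_def_of_pos h0]
    have e2 : Real.log δ₀ * (1 - 1 / s) = Real.log δ₀ + s := by
      field_simp
      nlinarith [hs2]
    rw [e2, Real.exp_add, Real.exp_log h0]
  have hexps : 1 + s ≤ Real.exp s := by
    have := Real.add_one_le_exp s; linarith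
  have hr2 : δ₀ * (1 + s) ≤ r := by
    calc δ₀ * (1 + s) ≤ δ₀ * Real.exp s := by nlinarith
      _ = δ₀ ^ (1 - 1 / s) := hδexp.symm
      _ ≤ r := hrδ
  have hrpos : 0 < r := lt_of_lt_of_le (by nlinarith) hr2
  obtain ⟨Lr, hLrdef⟩ : ∃ L, L = -Real.log r := ⟨_, rfl⟩
  have hLr0 : 0 ≤ Lr := by
    have := Real.log_nonpos (le_of_lt hrpos) (le_of_lt hr1)
    rw [hLrdef]; linarith
  have h1r : 1 - r ≤ Lr := by
    have := Real.log_le_sub_one_of_pos hrpos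
    rw [hLrdef]; linarith
  have k1 : δ₀ ≤ (r - δ₀) / s := by
    rw [le_div_iff₀ hs0]; nlinarith
  have k2 : δ₀ * ((1 - r) * (1 + r)) ≤ 2 * Lr * δ₀ := by
    have t1 : (1 - r) * (1 + r) ≤ (1 - r) * 2 :=
      mul_le_mul_of_nonneg_left (by linarith) (by linarith)
    have t2 : (1 - r) * 2 ≤ Lr * 2 := by linarith
    have t3 : δ₀ * ((1 - r) * (1 + r)) ≤ δ₀ * (Lr * 2) :=
      mul_le_mul_of_nonneg_left (le_trans t1 t2) (le_of_lt h0)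
    linarith [t3]
  have k3 : 2 * Lr * δ₀ ≤ 2 * Lr * ((r - δ₀) / s) := by nlinarith
  have hE : r * (1 - δ₀ * r) ≤ (r - δ₀) * (1 + 2 * Lr / s) := by
    have expand : r * (1 - δ₀ * r) = (r - δ₀) + δ₀ * ((1 - r) * (1 + r)) := by ring
    have expand2 : (r - δ₀) * (1 + 2 * Lr / s) = (r - δ₀) + 2 * Lr * ((r - δ₀) / s) := by ring
    rw [expand, expand2]; linarith
  have hden1 : 0 < 1 + 2 * Lr / s := by positivity
  have hden2 : 0 < 1 - δ₀ * r := by nlinarith [Real.exp_pos 1, h1]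
  have heq : Real.log r * (2 / s) = -(2 * Lr / s) := by
    rw [hLrdef]; field_simp
  have hF : r ^ ((2 : ℝ) / s) ≤ 1 / (1 + 2 * Lr / s) := by
    calc r ^ ((2 : ℝ) / s) = Real.exp (-(2 * Lr / s)) := by
          rw [Real.rpow_def_of_pos hrpos, heq]
      _ = 1 / Real.exp (2 * Lr / s) := by rw [Real.exp_neg, one_div]
      _ ≤ 1 / (1 + 2 * Lr / s) :=
          one_div_le_one_div_of_le hden1 (by linarith [Real.add_one_le_exp (2 * Lr / s)])
  have hsplit : r ^ (1 + 2 / s) = r * r ^ ((2 : ℝ) / s) := by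
    rw [Real.rpow_add hrpos, Real.rpow_one]
  calc r ^ (1 + 2 / s) = r * r ^ ((2 : ℝ) / s) := hsplit
    _ ≤ r * (1 / (1 + 2 * Lr / s)) := by
        apply mul_le_mul_of_nonneg_left hF (le_of_lt hrpos)
    _ = r / (1 + 2 * Lr / s) := by ring
    _ ≤ (r - δ₀) / (1 - δ₀ * r) := by
        rw [div_le_div_iff₀ hden1 hden2]
        nlinarith [hE]


/-- Pseudo-hyperbolic distance perturbation lemma. -/
theorem stmt15 (δ₀ : ℝ) (hδ₀ : δ₀ ∈ Set.Ioo (0:ℝ) (1 / Real.exp 1))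
    (γ δ : ℝ)
    (hγ : γ = 1 + 2 / Real.sqrt (-Real.log δ₀))
    (hδ : δ = δ₀ ^ (1 - 1 / Real.sqrt (-Real.log δ₀)))
    (x y z : ℂ)
    (hx : x ∈ Metric.ball (0:ℂ) 1) (hy : y ∈ Metric.ball (0:ℂ) 1)
    (hz : z ∈ Metric.ball (0:ℂ) 1)
    (hxy : pseudoDist x y ≤ δ₀) (hxz : δ ≤ pseudoDist x z) :
    pseudoDist x z ^ γ ≤ pseudoDist y z := by
  obtain ⟨hδ₀0, hδ₀1⟩ := hδ₀
  have hx' : ‖x‖ < 1 := by simpa using mem_ball_zero_iff.mp hx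
  have hy' : ‖y‖ < 1 := by simpa using mem_ball_zero_iff.mp hy
  have hz' : ‖z‖ < 1 := by simpa using mem_ball_zero_iff.mp hz
  have hr1 : pseudoDist x z < 1 := pd_lt_one x z hx' hz'
  have hd1 : pseudoDist x y < 1 := pd_lt_one x y hx' hy'
  have hd0 : 0 ≤ pseudoDist x y :=
    div_nonneg (norm_nonneg _) (norm_nonneg _)
  have hr0 : 0 ≤ pseudoDist x z :=
    div_nonneg (norm_nonneg _) (norm_nonneg _)
  have hδr : δ₀ ^ (1 - 1 / Real.sqrt (-Real.log δ₀)) ≤ pseudoDist x z := hδ ▸ hxz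
  have h1 : pseudoDist x z ^ γ ≤ (pseudoDist x z - δ₀) / (1 - δ₀ * pseudoDist x z) := by
    rw [hγ]; exact real_part δ₀ (pseudoDist x z) hδ₀0 hδ₀1 hr1 hδr
  have he1 : (1 : ℝ) < Real.exp 1 := by
    have := Real.add_one_le_exp 1; linarith
  have hδ₀lt1 : δ₀ < 1 := by
    have : 1 / Real.exp 1 < 1 := by
      rw [div_lt_one (Real.exp_pos 1)]; exact he1
    linarith
  have hden2 : 0 < 1 - δ₀ * pseudoDist x z := by nlinarith
  have hdend : 0 < 1 - pseudoDist x y * pseudoDist x z := by nlinarith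
  have hmono : (pseudoDist x z - δ₀) / (1 - δ₀ * pseudoDist x z)
      ≤ (pseudoDist x z - pseudoDist x y) / (1 - pseudoDist x y * pseudoDist x z) := by
    rw [div_le_div_iff₀ hden2 hdend]
    have hsq : 0 ≤ 1 - pseudoDist x z * pseudoDist x z := by nlinarith
    nlinarith [mul_nonneg (sub_nonneg.2 hxy) hsq]
  have htri := pd_triangle x y z hx' hy' hz'
  linarith

end
end
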